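/- Let a, b, c, d : (0,∞) → ℝ (no regularity assumed) and suppose there is a measurable set M ⊆ (0,∞)² with l₂(M) = 0 such that a(x) + b(y) = c(x+y) + d(x/y) for all (x,y) ∈ (0,∞)² \ M. Then there exist an additive function A : (0,∞) → ℝ, logarithmic type functions L_a, L_b : (0,∞) → ℝ, and constants α, β, γ ∈ ℝ such that for Lebesgue-almost all x ∈ (0,∞): a(x) = A(x) + L_a(x) + α, b(x) = A(x) + L_b(x) + β, c(x) = A(x) + L_a(x) + L_b(x) + γ, and d(x) = L_a(x/(x+1)) − L_b(x+1) + α + β − γ. -/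

import Mathlib

open MeasureTheory Set Filter

namespace DB

lemma imageNull {f : ℝ → ℝ} {s : Set ℝ} (hf : DifferentiableOn ℝ f s) (hs : volume s = 0) :
    volume (f '' s) = 0 :=
  addHaar_image_eq_zero_of_differentiableOn_of_addHaar_eq_zero volume hf hs

/-- null-preimage property -/
def Npp (f : ℝ → ℝ) : Prop := ∀ S : Set ℝ, volume S = 0 → volume (f ⁻¹' S) = 0

lemma npp_affine {p q : ℝ} (hp : p ≠ 0) : Npp (fun x => p * x + q) := by
  intro S hS
  have h1 : (fun x : ℝ => p * x + q) ⁻¹' S = (fun y : ℝ => (y - q) / p) '' S := by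
    ext x
    constructor
    · intro hx; exact ⟨p * x + q, hx, by field_simp; ring⟩
    · rintro ⟨y, hy, rfl⟩
      have : p * ((y - q) / p) + q = y := by field_simp; ring
      simpa [mem_preimage, this] using hy
  rw [h1]
  exact imageNull ((differentiable_id.sub_const q).div_const p).differentiableOn hS

lemma npp_exp : Npp Real.exp := by
  intro S hS
  have h1 : Real.exp ⁻¹' S = Real.log '' (S ∩ Ioi 0) := by
    ext x
    constructor
    · intro hx; exact ⟨Real.exp x, ⟨hx, Real.exp_pos x⟩, Real.log_exp x⟩
    · rintro ⟨y, ⟨hy, hy0⟩, rfl⟩; simpa [mem_preimage, Real.exp_log hy0] using hy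
  rw [h1]
  refine imageNull ?_ (measure_mono_null inter_subset_left hS)
  intro y hy
  exact (Real.differentiableAt_log (ne_of_gt hy.2)).differentiableWithinAt

lemma prodNull {α β : Type*} [MeasureSpace α] [MeasureSpace β]
    [SigmaFinite (volume : Measure β)]
    {T : Set (α × β)} (hTm : MeasurableSet T)
    (h : ∀ᵐ x : α, volume {y : β | (x, y) ∈ T} = 0) : volume T = 0 := by
  rw [show (volume : Measure (α × β)) = (volume : Measure α).prod volume from rfl,
    Measure.measure_prod_null hTm]
  filter_upwards [h] with x hx
  exact hx

lemma sliceNull {α β : Type*} [MeasureSpace α] [MeasureSpace β]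
    [SigmaFinite (volume : Measure β)]
    {T : Set (α × β)} (hTm : MeasurableSet T) (hT0 : volume T = 0) :
    MeasurableSet {x : α | volume {y : β | (x, y) ∈ T} ≠ 0} ∧
      volume {x : α | volume {y : β | (x, y) ∈ T} ≠ 0} = 0 := by
  have hmeas : Measurable fun x : α => volume (Prod.mk x ⁻¹' T) :=
    measurable_measure_prodMk_left hTm
  constructor
  · exact (hmeas (measurableSet_singleton 0)).compl
  · have h0 : (volume : Measure (α×β)) = (volume : Measure α).prod volume := rfl
    rw [h0, Measure.measure_prod_null hTm] at hT0
    have : ∀ᵐ x : α, volume {y : β | (x, y) ∈ T} = 0 := by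
      filter_upwards [hT0] with x hx; exact hx
    rw [ae_iff] at this
    exact this

lemma swapNull {T : Set (ℝ × ℝ)} (hTm : MeasurableSet T) (hT0 : volume T = 0) :
    volume {p : ℝ × ℝ | (p.2, p.1) ∈ T} = 0 := by
  have h := (Measure.measurePreserving_swap (μ := (volume : Measure ℝ)) (ν := volume)).measure_preimage
    hTm.nullMeasurableSet
  have h2 : Prod.swap ⁻¹' T = {p : ℝ × ℝ | (p.2, p.1) ∈ T} := rfl
  rw [h2] at h
  rw [show (volume : Measure (ℝ × ℝ)) = (volume : Measure ℝ).prod volume from rfl, h]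
  exact hT0

lemma fstNull {Z : Set ℝ} (hZm : MeasurableSet Z) (hZ0 : volume Z = 0) :
    volume {p : ℝ × ℝ | p.1 ∈ Z} = 0 := by
  have : {p : ℝ × ℝ | p.1 ∈ Z} = Z ×ˢ (univ : Set ℝ) := by
    ext p; simp [mem_prod]
  rw [this, show (volume : Measure (ℝ × ℝ)) = (volume : Measure ℝ).prod volume from rfl,
    Measure.prod_prod, hZ0, zero_mul]

lemma sndNull {Z : Set ℝ} (hZm : MeasurableSet Z) (hZ0 : volume Z = 0) :
    volume {p : ℝ × ℝ | p.2 ∈ Z} = 0 := by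
  have : {p : ℝ × ℝ | p.2 ∈ Z} = (univ : Set ℝ) ×ˢ Z := by
    ext p; simp [mem_prod]
  rw [this, show (volume : Measure (ℝ × ℝ)) = (volume : Measure ℝ).prod volume from rfl,
    Measure.prod_prod, hZ0, mul_zero]

lemma pick {α : Type*} [MeasureSpace α] {S B : Set α} (hS : volume S ≠ 0)
    (hB : volume B = 0) : ∃ x ∈ S, x ∉ B := by
  by_contra h
  push_neg at h
  exact hS (measure_mono_null h hB)

lemma secNull1 {Z : Set ℝ} (hZm : MeasurableSet Z) (hZ0 : volume Z = 0) {h : ℝ → ℝ → ℝ}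
    (hm : Measurable fun p : ℝ × ℝ => h p.1 p.2) (hh : ∀ᵐ t : ℝ, Npp (h t)) :
    volume {p : ℝ × ℝ | h p.1 p.2 ∈ Z} = 0 := by
  refine prodNull (hm hZm) ?_
  filter_upwards [hh] with t ht
  exact ht Z hZ0

lemma secNull2 {V : Set (ℝ × ℝ)} (hVm : MeasurableSet V) (hV0 : volume V = 0) {g : ℝ → ℝ}
    {h : ℝ → ℝ → ℝ} (hgm : Measurable g) (hhm : Measurable fun p : ℝ × ℝ => h p.1 p.2)
    (hg : Npp g) (hh : ∀ᵐ t : ℝ, Npp (h t)) :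
    volume {p : ℝ × ℝ | (g p.1, h p.1 p.2) ∈ V} = 0 := by
  have hmT : MeasurableSet {p : ℝ × ℝ | (g p.1, h p.1 p.2) ∈ V} :=
    ((hgm.comp measurable_fst).prodMk hhm) hVm
  refine prodNull hmT ?_
  obtain ⟨hBm, hB0⟩ := sliceNull hVm hV0
  have hGbad : volume (g ⁻¹' {u : ℝ | volume {v : ℝ | (u, v) ∈ V} ≠ 0}) = 0 := hg _ hB0
  have h1 : ∀ᵐ t : ℝ, volume {v : ℝ | (g t, v) ∈ V} = 0 := by
    rw [ae_iff]
    exact measure_mono_null (fun t ht => ht) hGbad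
  filter_upwards [h1, hh] with t h1t h2t
  have : {s : ℝ | (g t, h t s) ∈ V} = (h t) ⁻¹' {v : ℝ | (g t, v) ∈ V} := rfl
  rw [this]
  exact h2t _ h1t

lemma npp_id : Npp (fun x : ℝ => x) := fun S hS => hS

lemma npp_mul_left {c : ℝ} (hc : c ≠ 0) : Npp (fun x : ℝ => c * x) := by
  have := npp_affine (q := 0) hc
  simpa using this

lemma npp_add_const (q : ℝ) : Npp (fun x : ℝ => x + q) := by
  have := npp_affine (p := 1) (q := q) one_ne_zero
  simpa using this

lemma npp_const_sub (q : ℝ) : Npp (fun x : ℝ => q - x) := by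
  have := npp_affine (p := -1) (q := q) (by norm_num)
  convert this using 2 with x
  ring


lemma npp_congr {f g : ℝ → ℝ} (h : ∀ x, f x = g x) (hf : Npp f) : Npp g := by
  intro S hS
  have : g ⁻¹' S = f ⁻¹' S := by ext x; simp [h x]
  rw [this]; exact hf S hS

lemma ioo_ne_zero {x : ℝ} (hx : 0 < x) : volume (Ioo (0:ℝ) x) ≠ 0 := by
  rw [Real.volume_Ioo]
  simp [ENNReal.ofReal_eq_zero, hx]


lemma npp_add_left (t : ℝ) : Npp (fun z : ℝ => t + z) :=
  npp_congr (f := fun u : ℝ => 1 * u + t) (by intro u; ring) (npp_affine one_ne_zero)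

lemma npp_add_right (t : ℝ) : Npp (fun z : ℝ => z + t) :=
  npp_congr (f := fun u : ℝ => 1 * u + t) (by intro u; ring) (npp_affine one_ne_zero)

lemma npp_neg_add (t : ℝ) : Npp (fun z : ℝ => t - z) := npp_const_sub t

lemma npp_sub_right (t : ℝ) : Npp (fun z : ℝ => z - t) :=
  npp_congr (f := fun u : ℝ => 1 * u + (-t)) (by intro u; ring) (npp_affine one_ne_zero)

theorem deBruijn {F : ℝ → ℝ} {N : Set (ℝ × ℝ)} (hNm : MeasurableSet N) (hN0 : volume N = 0)
    (hF : ∀ x y : ℝ, 0 < x → 0 < y → (x, y) ∉ N → F (x + y) = F x + F y) :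
    ∃ A : ℝ → ℝ, (∀ x y : ℝ, 0 < x → 0 < y → A (x + y) = A x + A y) ∧
      ∃ Z : Set ℝ, MeasurableSet Z ∧ volume Z = 0 ∧ ∀ x, 0 < x → x ∉ Z → F x = A x := by
  -- swapped version of N
  set Nsw : Set (ℝ × ℝ) := Prod.swap ⁻¹' N with hNswdef
  have hNswm : MeasurableSet Nsw := measurable_swap hNm
  have hNsw0 : volume Nsw = 0 := swapNull hNm hN0
  -- W2 : the set of (t,s) with (t-s, s) ∈ N
  set W2 : Set (ℝ × ℝ) := {p : ℝ × ℝ | (p.1 - p.2, p.2) ∈ N} with hW2def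
  have hW2m : MeasurableSet W2 := (measurable_fst.sub measurable_snd).prodMk measurable_snd hNm
  have hW2_0 : volume W2 = 0 := by
    have hV2 : volume {q : ℝ × ℝ | ((fun t : ℝ => t) q.1, q.2 - q.1) ∈ Nsw} = 0 := by
      refine secNull2 (g := fun t : ℝ => t) (h := fun t s : ℝ => s - t) hNswm hNsw0
        measurable_id (by exact measurable_snd.sub measurable_fst) npp_id ?_
      filter_upwards with t
      exact npp_sub_right t
    have hV2m : MeasurableSet {q : ℝ × ℝ | ((fun t : ℝ => t) q.1, q.2 - q.1) ∈ Nsw} :=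
      (measurable_fst.prodMk (measurable_snd.sub measurable_fst)) hNswm
    have := swapNull hV2m hV2
    refine measure_mono_null ?_ this
    intro p hp
    exact hp
  -- per-x bad sets
  have key : ∀ x t s : ℝ, 0 < s → s < t → t < x →
      (t - s, x - t) ∉ N → (t, s) ∉ W2 →
      F (x - t) + F t = F (x - s) + F s := by
    intro x t s hs hst htx h1 h2
    have e1 : F ((t - s) + (x - t)) = F (t - s) + F (x - t) :=
      hF _ _ (by linarith) (by linarith) h1
    have e2 : F ((t - s) + s) = F (t - s) + F s :=
      hF _ _ (by linarith) hs h2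
    have r1 : (t - s) + (x - t) = x - s := by ring
    have r2 : (t - s) + s = t := by ring
    rw [r1] at e1
    rw [r2] at e2
    linarith
  -- W1 x : the set of (t,s) with (t-s, x-t) ∈ N  -- null for every x
  have hW1 : ∀ x : ℝ, volume {p : ℝ × ℝ | (p.1 - p.2, x - p.1) ∈ N} = 0 := by
    intro x
    have h1 : volume {p : ℝ × ℝ | ((fun t => x - t) p.1, (fun t s => t - s) p.1 p.2) ∈ Nsw} = 0 := by
      refine secNull2 (g := fun t : ℝ => x - t) (h := fun t s : ℝ => t - s) hNswm hNsw0
        (measurable_const.sub measurable_id) (by exact measurable_fst.sub measurable_snd)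
        (npp_const_sub x) ?_
      filter_upwards with t
      exact npp_neg_add t
    refine measure_mono_null ?_ h1
    intro p hp
    exact hp
  have hW1m : ∀ x : ℝ, MeasurableSet {p : ℝ × ℝ | (p.1 - p.2, x - p.1) ∈ N} := fun x =>
    ((measurable_fst.sub measurable_snd).prodMk (measurable_const.sub measurable_fst)) hNm
  -- step 1 : define A x via a good base point t₀
  have step1 : ∀ x : ℝ, ∃ (v : ℝ) (Zq : Set ℝ), MeasurableSet Zq ∧ volume Zq = 0 ∧
      (0 < x → ∀ t, t ∈ Ioo 0 x → t ∉ Zq → F (x - t) + F t = v) := by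
    intro x
    by_cases hx : 0 < x
    · set W12 : Set (ℝ × ℝ) := {p : ℝ × ℝ | (p.1 - p.2, x - p.1) ∈ N} ∪ W2 with hW12def
      have hW12m : MeasurableSet W12 := (hW1m x).union hW2m
      have hW12_0 : volume W12 = 0 := measure_union_null (hW1 x) hW2_0
      set W12sw : Set (ℝ × ℝ) := Prod.swap ⁻¹' W12 with hW12swdef
      have hW12swm : MeasurableSet W12sw := measurable_swap hW12m
      have hW12sw0 : volume W12sw = 0 := swapNull hW12m hW12_0
      obtain ⟨hS1m, hS1_0⟩ := sliceNull hW12m hW12_0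
      obtain ⟨hS2m, hS2_0⟩ := sliceNull hW12swm hW12sw0
      obtain ⟨t₀, ht₀Ioo, ht₀good⟩ := pick (ioo_ne_zero hx)
        (measure_union_null hS1_0 hS2_0)
      have ht₀1 : volume {v : ℝ | (t₀, v) ∈ W12} = 0 := by
        by_contra h
        exact ht₀good (Or.inl h)
      have ht₀2 : volume {v : ℝ | (t₀, v) ∈ W12sw} = 0 := by
        by_contra h
        exact ht₀good (Or.inr h)
      refine ⟨F (x - t₀) + F t₀, {v : ℝ | (t₀, v) ∈ W12} ∪ {v : ℝ | (t₀, v) ∈ W12sw},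
        ?_, measure_union_null ht₀1 ht₀2, ?_⟩
      · exact ((measurable_prodMk_left hW12m)).union ((measurable_prodMk_left hW12swm))
      · intro _ t htIoo htgood
        rcases lt_trichotomy t t₀ with hlt | heq | hgt
        · -- t < t₀ : apply key with pair (t₀, t)
          have hpair : (t₀, t) ∉ W12 := fun hmem => htgood (Or.inl hmem)
          have h1 : (t₀ - t, x - t₀) ∉ N := fun hmem => hpair (Or.inl hmem)
          have h2 : (t₀, t) ∉ W2 := fun hmem => hpair (Or.inr hmem)
          exact (key x t₀ t htIoo.1 hlt ht₀Ioo.2 h1 h2).symm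
        · rw [heq]
        · -- t₀ < t : apply key with pair (t, t₀); note (t,t₀) ∈ W12 ↔ (t₀,t) ∈ W12sw
          have hpair : (t, t₀) ∉ W12 := fun hmem => htgood (Or.inr hmem)
          have h1 : (t - t₀, x - t) ∉ N := fun hmem => hpair (Or.inl hmem)
          have h2 : (t, t₀) ∉ W2 := fun hmem => hpair (Or.inr hmem)
          exact (key x t t₀ ht₀Ioo.1 hgt htIoo.2 h1 h2)
    · exact ⟨0, ∅, MeasurableSet.empty, measure_empty, fun h => absurd h hx⟩
  choose A Zq hZqm hZq0 hQ using step1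
  -- step 2 : additivity
  have addA : ∀ x y : ℝ, 0 < x → 0 < y → A (x + y) = A x + A y := by
    intro x y hx hy
    -- the bad set
    have hC1 : volume {p : ℝ × ℝ | (fun t s => t + s) p.1 p.2 ∈ Zq (x + y)} = 0 := by
      refine secNull1 (h := fun t s : ℝ => t + s) (hZqm (x + y)) (hZq0 (x + y))
        (by exact measurable_fst.add measurable_snd) ?_
      filter_upwards with t
      exact npp_add_left t
    have hC2 : volume {p : ℝ × ℝ | p.1 ∈ Zq x} = 0 := fstNull (hZqm x) (hZq0 x)
    have hC3 : volume {p : ℝ × ℝ | p.2 ∈ Zq y} = 0 := sndNull (hZqm y) (hZq0 y)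
    have hC4 : volume {p : ℝ × ℝ | ((fun t => x - t) p.1, (fun t s => y - s) p.1 p.2) ∈ N} = 0 := by
      refine secNull2 (g := fun t : ℝ => x - t) (h := fun t s : ℝ => y - s) hNm hN0
        (measurable_const.sub measurable_id) (by exact measurable_const.sub measurable_snd)
        (npp_const_sub x) ?_
      filter_upwards with t
      exact npp_neg_add y
    have hBig : volume ({p : ℝ × ℝ | (fun t s => t + s) p.1 p.2 ∈ Zq (x + y)} ∪
        ({p : ℝ × ℝ | p.1 ∈ Zq x} ∪ ({p : ℝ × ℝ | p.2 ∈ Zq y} ∪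
        (N ∪ {p : ℝ × ℝ | ((fun t => x - t) p.1, (fun t s => y - s) p.1 p.2) ∈ N})))) = 0 := by
      refine measure_union_null hC1 (measure_union_null hC2 (measure_union_null hC3
        (measure_union_null hN0 hC4)))
    have hSne : volume (Ioo (0:ℝ) x ×ˢ Ioo (0:ℝ) y) ≠ 0 := by
      rw [show (volume : Measure (ℝ × ℝ)) = (volume : Measure ℝ).prod volume from rfl,
        Measure.prod_prod]
      exact mul_ne_zero (ioo_ne_zero hx) (ioo_ne_zero hy)
    obtain ⟨p, hpS, hpgood⟩ := pick hSne hBig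
    obtain ⟨t, s⟩ := p
    simp only [mem_prod] at hpS
    obtain ⟨htIoo, hsIoo⟩ := hpS
    have hg1 : t + s ∉ Zq (x + y) := fun h => hpgood (Or.inl h)
    have hg2 : t ∉ Zq x := fun h => hpgood (Or.inr (Or.inl h))
    have hg3 : s ∉ Zq y := fun h => hpgood (Or.inr (Or.inr (Or.inl h)))
    have hg4 : (t, s) ∉ N := fun h => hpgood (Or.inr (Or.inr (Or.inr (Or.inl h))))
    have hg5 : (x - t, y - s) ∉ N := fun h => hpgood (Or.inr (Or.inr (Or.inr (Or.inr h))))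
    have e1 : F (x + y - (t + s)) + F (t + s) = A (x + y) := by
      refine hQ (x + y) (by linarith) (t + s) ⟨by linarith [htIoo.1, hsIoo.1], by
        linarith [htIoo.2, hsIoo.2]⟩ hg1
    have e2 : F (t + s) = F t + F s := hF t s htIoo.1 hsIoo.1 hg4
    have e3 : F ((x - t) + (y - s)) = F (x - t) + F (y - s) :=
      hF _ _ (by linarith [htIoo.2]) (by linarith [hsIoo.2]) hg5
    have r3 : (x - t) + (y - s) = x + y - (t + s) := by ring
    rw [r3] at e3
    have e4 : F (x - t) + F t = A x := hQ x hx t htIoo hg2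
    have e5 : F (y - s) + F s = A y := hQ y hy s hsIoo hg3
    linarith
  -- step 3 : F = A a.e. on (0,∞)
  obtain ⟨hZfm, hZf0⟩ := sliceNull hW2m hW2_0
  refine ⟨A, addA, {u : ℝ | volume {v : ℝ | (u, v) ∈ W2} ≠ 0}, hZfm, hZf0, ?_⟩
  intro x hx hxZ
  have hsec : volume {v : ℝ | (x, v) ∈ W2} = 0 := by
    by_contra h
    exact hxZ h
  obtain ⟨t, htIoo, htgood⟩ := pick (ioo_ne_zero hx)
    (measure_union_null hsec (hZq0 x))
  have h1 : (x, t) ∉ W2 := fun h => htgood (Or.inl h)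
  have h2 : t ∉ Zq x := fun h => htgood (Or.inr h)
  have e1 : F ((x - t) + t) = F (x - t) + F t :=
    hF _ _ (by linarith [htIoo.2]) htIoo.1 h1
  have r1 : (x - t) + t = x := by ring
  rw [r1] at e1
  have e2 : F (x - t) + F t = A x := hQ x hx t htIoo h2
  linarith

theorem deBruijnMul {F : ℝ → ℝ} {N : Set (ℝ × ℝ)} (hNm : MeasurableSet N) (hN0 : volume N = 0)
    (hF : ∀ x y : ℝ, 0 < x → 0 < y → (x, y) ∉ N → F (x * y) = F x + F y) :
    ∃ L : ℝ → ℝ, (∀ x y : ℝ, 0 < x → 0 < y → L (x * y) = L x + L y) ∧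
      ∃ Z : Set ℝ, MeasurableSet Z ∧ volume Z = 0 ∧ ∀ x, 0 < x → x ∉ Z → F x = L x := by
  set Nt : Set (ℝ × ℝ) := {p : ℝ × ℝ | (Real.exp p.1, Real.exp p.2) ∈ N} with hNtdef
  have hNtm : MeasurableSet Nt :=
    ((Real.measurable_exp.comp measurable_fst).prodMk
      (Real.measurable_exp.comp measurable_snd)) hNm
  have hNt0 : volume Nt = 0 := by
    have h1 := secNull2 (g := Real.exp) (h := fun _ s : ℝ => Real.exp s) hNm hN0
      Real.measurable_exp (by exact Real.measurable_exp.comp measurable_snd) npp_exp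
      (by filter_upwards with t; exact npp_exp)
    exact measure_mono_null (fun p hp => hp) h1
  have hG : ∀ p q : ℝ, 0 < p → 0 < q → (p, q) ∉ Nt →
      (fun u => F (Real.exp u)) (p + q) = (fun u => F (Real.exp u)) p + (fun u => F (Real.exp u)) q := by
    intro p q _ _ hpq
    simp only [Real.exp_add]
    exact hF _ _ (Real.exp_pos p) (Real.exp_pos q) hpq
  obtain ⟨Ab, hAbadd, Z1, hZ1m, hZ10, hAb⟩ := deBruijn (F := fun u => F (Real.exp u)) hNtm hNt0 hG
  -- extend Ab to an additive function on all of ℝ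
  set A' : ℝ → ℝ := fun p => Ab (p + (|p| + 1)) - Ab (|p| + 1) with hA'def
  have habs : ∀ p : ℝ, 0 < p + (|p| + 1) := by
    intro p; have := neg_abs_le p; linarith
  have hwd : ∀ p m : ℝ, 0 < m → 0 < p + m → A' p = Ab (p + m) - Ab m := by
    intro p m hm hpm
    have hn : 0 < |p| + 1 := by positivity
    have h1 : Ab ((p + (|p| + 1)) + m) = Ab (p + (|p| + 1)) + Ab m :=
      hAbadd _ _ (habs p) hm
    have h2 : Ab ((p + m) + (|p| + 1)) = Ab (p + m) + Ab (|p| + 1) :=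
      hAbadd _ _ hpm hn
    have hr : (p + (|p| + 1)) + m = (p + m) + (|p| + 1) := by ring
    rw [hr] at h1
    simp only [hA'def]
    linarith
  have hA'add : ∀ p q : ℝ, A' (p + q) = A' p + A' q := by
    intro p q
    set m : ℝ := |p| + |q| + 1 with hmdef
    have hm : 0 < m := by positivity
    have hpm : 0 < p + m := by have := neg_abs_le p; have := abs_nonneg q; simp only [hmdef]; linarith
    have hqm : 0 < q + m := by have := neg_abs_le q; have := abs_nonneg p; simp only [hmdef]; linarith
    have hpq : 0 < (p + q) + (m + m) := by linarith
    rw [hwd p m hm hpm, hwd q m hm hqm, hwd (p + q) (m + m) (by linarith) hpq]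
    have h1 : Ab ((p + m) + (q + m)) = Ab (p + m) + Ab (q + m) := hAbadd _ _ hpm hqm
    have h2 : Ab (m + m) = Ab m + Ab m := hAbadd _ _ hm hm
    have hr : (p + q) + (m + m) = (p + m) + (q + m) := by ring
    rw [hr]
    linarith
  have hA'eq : ∀ p : ℝ, 0 < p → A' p = Ab p := by
    intro p hp
    have hn : 0 < |p| + 1 := by positivity
    rw [hwd p (|p| + 1) hn (habs p)]
    have := hAbadd p (|p| + 1) hp hn
    linarith
  set L : ℝ → ℝ := fun x => A' (Real.log x) with hLdef
  have hLmul : ∀ x y : ℝ, 0 < x → 0 < y → L (x * y) = L x + L y := by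
    intro x y hx hy
    simp only [hLdef]
    rw [Real.log_mul (ne_of_gt hx) (ne_of_gt hy), hA'add]
  -- a.e. equality
  have hB1 : volume (Real.exp '' Z1) = 0 :=
    imageNull Real.differentiable_exp.differentiableOn hZ10
  set Z2 : Set ℝ := toMeasurable volume (Real.exp '' Z1) with hZ2def
  have hZ2m : MeasurableSet Z2 := measurableSet_toMeasurable _ _
  have hZ20 : volume Z2 = 0 := by rw [hZ2def, measure_toMeasurable]; exact hB1
  have hF1 : ∀ x : ℝ, 1 < x → x ∉ Z2 → F x = L x := by
    intro x hx hxZ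
    have hx0 : (0:ℝ) < x := by linarith
    have hlog : 0 < Real.log x := Real.log_pos hx
    have hnZ : Real.log x ∉ Z1 := by
      intro h
      exact hxZ (subset_toMeasurable _ _ ⟨Real.log x, h, Real.exp_log hx0⟩)
    have := hAb (Real.log x) hlog hnZ
    rw [Real.exp_log hx0] at this
    rw [this, hLdef]
    exact (hA'eq _ hlog).symm
  obtain ⟨hSNm, hSN0⟩ := sliceNull hNm hN0
  refine ⟨L, hLmul, {u : ℝ | volume {v : ℝ | (u, v) ∈ N} ≠ 0}, hSNm, hSN0, ?_⟩
  intro x hx hxZ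
  have h1 : volume {y : ℝ | (x, y) ∈ N} = 0 := by by_contra h; exact hxZ h
  have h2 : volume {y : ℝ | x * y ∈ Z2} = 0 := by
    have := npp_mul_left (ne_of_gt hx) Z2 hZ20
    exact measure_mono_null (fun y hy => hy) this
  have hIne : volume (Ioi (max 1 x⁻¹)) ≠ 0 := by
    rw [Real.volume_Ioi]; exact ENNReal.top_ne_zero
  obtain ⟨y, hyIoi, hygood⟩ := pick hIne
    (measure_union_null h1 (measure_union_null h2 hZ20))
  rw [mem_Ioi] at hyIoi
  have hy1 : 1 < y := lt_of_le_of_lt (le_max_left _ _) hyIoi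
  have hy0 : (0:ℝ) < y := by linarith
  have hxy1 : 1 < x * y := by
    have hxi : x⁻¹ < y := lt_of_le_of_lt (le_max_right _ _) hyIoi
    calc (1:ℝ) = x * x⁻¹ := by field_simp
    _ < x * y := by exact mul_lt_mul_of_pos_left hxi hx
  have hg1 : (x, y) ∉ N := fun h => hygood (Or.inl h)
  have hg2 : x * y ∉ Z2 := fun h => hygood (Or.inr (Or.inl h))
  have hg3 : y ∉ Z2 := fun h => hygood (Or.inr (Or.inr h))
  have e1 : F (x * y) = F x + F y := hF x y hx hy0 hg1
  have e2 : F (x * y) = L (x * y) := hF1 _ hxy1 hg2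
  have e3 : F y = L y := hF1 _ hy1 hg3
  have e4 : L (x * y) = L x + L y := hLmul x y hx hy0
  linarith

lemma aeNotMem {α : Type*} [MeasureSpace α] {B : Set α} (hB : volume B = 0) :
    ∀ᵐ x : α, x ∉ B := by
  rw [ae_iff]
  simpa using hB

theorem pexider {g h : ℝ → ℝ} {N : Set (ℝ × ℝ)} (hNm : MeasurableSet N) (hN0 : volume N = 0)
    (hgh : ∀ x y : ℝ, 0 < x → 0 < y → (x, y) ∉ N → g x + g y = h (x + y)) :
    ∃ (A : ℝ → ℝ) (m : ℝ), (∀ x y : ℝ, 0 < x → 0 < y → A (x + y) = A x + A y) ∧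
      ∃ Z : Set ℝ, MeasurableSet Z ∧ volume Z = 0 ∧ ∀ x, 0 < x → x ∉ Z → g x = A x + m := by
  obtain ⟨hSNm, hSN0⟩ := sliceNull hNm hN0
  -- 3D bad sets
  set T1 : Set (ℝ × ℝ × ℝ) := {q : ℝ × ℝ × ℝ | (q.1 + q.2.1, q.2.2) ∈ N} with hT1def
  have hT1m : MeasurableSet T1 :=
    ((measurable_fst.add (measurable_fst.comp measurable_snd)).prodMk
      (measurable_snd.comp measurable_snd)) hNm
  have hT1_0 : volume T1 = 0 := by
    refine prodNull hT1m ?_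
    filter_upwards with x
    have h1 := secNull2 (g := fun y : ℝ => x + y) (h := fun _ s : ℝ => s) hNm hN0
      (by exact measurable_const.add measurable_id) (by exact measurable_snd)
      (npp_add_left x) (by filter_upwards with t; exact npp_id)
    exact measure_mono_null (fun p hp => hp) h1
  set T2 : Set (ℝ × ℝ × ℝ) := {q : ℝ × ℝ × ℝ | (q.1, q.2.1 + q.2.2) ∈ N} with hT2def
  have hT2m : MeasurableSet T2 :=
    (measurable_fst.prodMk ((measurable_fst.comp measurable_snd).add
      (measurable_snd.comp measurable_snd))) hNm
  have hT2_0 : volume T2 = 0 := by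
    refine prodNull hT2m ?_
    filter_upwards [aeNotMem hSN0] with x hx
    have hNx0 : volume {v : ℝ | (x, v) ∈ N} = 0 := by
      by_contra hcon; exact hx hcon
    have hNxm : MeasurableSet {v : ℝ | (x, v) ∈ N} := measurable_prodMk_left hNm
    have h1 := secNull1 (h := fun y z : ℝ => y + z) hNxm hNx0
      (by exact measurable_fst.add measurable_snd)
      (by filter_upwards with t; exact npp_add_left t)
    exact measure_mono_null (fun p hp => hp) h1
  set T12 : Set (ℝ × ℝ × ℝ) := T1 ∪ T2 with hT12def
  have hT12m : MeasurableSet T12 := hT1m.union hT2m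
  have hT12_0 : volume T12 = 0 := measure_union_null hT1_0 hT2_0
  -- pick x₀
  obtain ⟨hSTm, hST0⟩ := sliceNull hT12m hT12_0
  have hIne : volume (Ioi (0:ℝ)) ≠ 0 := by rw [Real.volume_Ioi]; exact ENNReal.top_ne_zero
  obtain ⟨x₀, hx₀Ioi, hx₀good⟩ := pick hIne hST0
  rw [mem_Ioi] at hx₀Ioi
  set B : Set (ℝ × ℝ) := {p : ℝ × ℝ | (x₀, (p.1, p.2)) ∈ T12} with hBdef
  have hBm : MeasurableSet B := by
    have : B = Prod.mk x₀ ⁻¹' T12 := by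
      ext p; simp [hBdef]
    rw [this]
    exact measurable_prodMk_left hT12m
  have hB0 : volume B = 0 := by
    have : volume {v : ℝ × ℝ | (x₀, v) ∈ T12} = 0 := by
      by_contra hcon; exact hx₀good hcon
    exact measure_mono_null (fun p hp => hp) this
  -- pointwise claim 1
  have claim1 : ∀ x y z : ℝ, 0 < x → 0 < y → 0 < z → (x, (y, z)) ∉ T12 →
      g (x + y) + g z = g x + g (y + z) := by
    intro x y z hx hy hz hq
    have h1 : (x + y, z) ∉ N := fun hc => hq (Or.inl hc)
    have h2 : (x, y + z) ∉ N := fun hc => hq (Or.inr hc)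
    have e1 : g (x + y) + g z = h ((x + y) + z) := hgh _ _ (by linarith) hz h1
    have e2 : g x + g (y + z) = h (x + (y + z)) := hgh _ _ hx (by linarith) h2
    have hr : (x + y) + z = x + (y + z) := by ring
    rw [hr] at e1
    linarith
  set w : ℝ → ℝ := fun y => g (x₀ + y) - g x₀ - g y with hwdef
  -- (*) : ν(y,z) = w y off B
  have star : ∀ y z : ℝ, 0 < y → 0 < z → (y, z) ∉ B →
      g (y + z) - g y - g z = w y := by
    intro y z hy hz hyz
    have := claim1 x₀ y z hx₀Ioi hy hz hyz
    simp only [hwdef]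
    linarith
  -- symmetrize and pick z₀
  set Bsw : Set (ℝ × ℝ) := B ∪ Prod.swap ⁻¹' B with hBswdef
  have hBswm : MeasurableSet Bsw := hBm.union (measurable_swap hBm)
  have hBsw0 : volume Bsw = 0 := measure_union_null hB0 (swapNull hBm hB0)
  set Bsw2 : Set (ℝ × ℝ) := Prod.swap ⁻¹' Bsw with hBsw2def
  have hBsw2m : MeasurableSet Bsw2 := measurable_swap hBswm
  have hBsw2_0 : volume Bsw2 = 0 := swapNull hBswm hBsw0
  obtain ⟨hS2m, hS2_0⟩ := sliceNull hBsw2m hBsw2_0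
  obtain ⟨z₀, hz₀Ioi, hz₀good⟩ := pick hIne hS2_0
  rw [mem_Ioi] at hz₀Ioi
  have hZy0 : volume {y : ℝ | (z₀, y) ∈ Bsw2} = 0 := by
    by_contra hcon; exact hz₀good hcon
  have hZym : MeasurableSet {y : ℝ | (z₀, y) ∈ Bsw2} := measurable_prodMk_left hBsw2m
  set c : ℝ := w z₀ with hcdef
  -- (**) : w y = c off Zy
  have starstar : ∀ y : ℝ, 0 < y → y ∉ {y : ℝ | (z₀, y) ∈ Bsw2} → w y = c := by
    intro y hy hyZ
    have hyz : (y, z₀) ∉ Bsw := hyZ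
    have h1 : (y, z₀) ∉ B := fun hc => hyz (Or.inl hc)
    have h2 : (z₀, y) ∉ B := fun hc => hyz (Or.inr hc)
    have e1 : g (y + z₀) - g y - g z₀ = w y := star y z₀ hy hz₀Ioi h1
    have e2 : g (z₀ + y) - g z₀ - g y = w z₀ := star z₀ y hz₀Ioi hy h2
    have hr : y + z₀ = z₀ + y := by ring
    rw [hr] at e1
    simp only [hcdef]
    linarith
  -- the Cauchy equation for G := g + c
  set N2 : Set (ℝ × ℝ) := B ∪ {p : ℝ × ℝ | p.1 ∈ {y : ℝ | (z₀, y) ∈ Bsw2}} with hN2def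
  have hN2m : MeasurableSet N2 := hBm.union (measurable_fst hZym)
  have hN2_0 : volume N2 = 0 := measure_union_null hB0 (fstNull hZym hZy0)
  have hG : ∀ x y : ℝ, 0 < x → 0 < y → (x, y) ∉ N2 →
      (fun u => g u + c) (x + y) = (fun u => g u + c) x + (fun u => g u + c) y := by
    intro y z hy hz hyz
    have h1 : (y, z) ∉ B := fun hc => hyz (Or.inl hc)
    have h2 : y ∉ {u : ℝ | (z₀, u) ∈ Bsw2} := fun hc => hyz (Or.inr hc)
    have e1 := star y z hy hz h1
    have e2 := starstar y hy h2
    simp only []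
    linarith
  obtain ⟨A, hAadd, ZG, hZGm, hZG0, hA⟩ := deBruijn (F := fun u => g u + c) hN2m hN2_0 hG
  refine ⟨A, -c, hAadd, ZG, hZGm, hZG0, ?_⟩
  intro x hx hxZ
  have := hA x hx hxZ
  linarith

lemma aeNZ : ∀ᵐ t : ℝ, t ≠ 0 := by
  rw [ae_iff]
  have : {t : ℝ | ¬ t ≠ 0} = {(0:ℝ)} := by ext t; simp
  rw [this]
  exact Real.volume_singleton

lemma npp_mul_right {c : ℝ} (hc : c ≠ 0) : Npp (fun x : ℝ => x * c) :=
  npp_congr (f := fun x : ℝ => c * x) (by intro x; ring) (npp_mul_left hc)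

lemma npp_div_const {c : ℝ} (hc : c ≠ 0) : Npp (fun x : ℝ => x / c) :=
  npp_congr (f := fun x : ℝ => c⁻¹ * x) (by intro x; rw [div_eq_mul_inv]; ring)
    (npp_mul_left (inv_ne_zero hc))

lemma swapNullG {α β : Type*} [MeasureSpace α] [MeasureSpace β]
    [SigmaFinite (volume : Measure α)] [SigmaFinite (volume : Measure β)]
    {T : Set (α × β)} (hTm : MeasurableSet T) (hT0 : volume T = 0) :
    volume {p : β × α | (p.2, p.1) ∈ T} = 0 := by
  have h := (Measure.measurePreserving_swap (μ := (volume : Measure β))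
    (ν := (volume : Measure α))).measure_preimage hTm.nullMeasurableSet
  have h2 : Prod.swap ⁻¹' T = {p : β × α | (p.2, p.1) ∈ T} := rfl
  rw [h2] at h
  rw [show (volume : Measure (β × α)) = (volume : Measure β).prod volume from rfl, h]
  rw [show ((volume : Measure α).prod volume) = (volume : Measure (α × β)) from rfl]
  exact hT0

lemma diagNull : volume {p : ℝ × ℝ | p.1 = p.2} = 0 := by
  have h := secNull1 (Z := {(0:ℝ)}) (measurableSet_singleton 0) Real.volume_singleton
    (h := fun t s : ℝ => t - s) (by exact measurable_fst.sub measurable_snd)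
    (by filter_upwards with t; exact npp_neg_add t)
  refine measure_mono_null ?_ h
  intro p hp
  simp only [mem_setOf_eq] at hp ⊢
  simp [sub_eq_zero, hp]

/-- reassociated version of a null subset of ℝ × (ℝ × ℝ) is null -/
lemma assocS {T : Set (ℝ × (ℝ × ℝ))} (hTm : MeasurableSet T) (hT0 : volume T = 0) :
    MeasurableSet {q : (ℝ × ℝ) × ℝ | (q.1.1, (q.1.2, q.2)) ∈ T} ∧
      volume {q : (ℝ × ℝ) × ℝ | (q.1.1, (q.1.2, q.2)) ∈ T} = 0 := by
  have hmap : Measurable fun q : (ℝ × ℝ) × ℝ => (q.1.1, (q.1.2, q.2)) :=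
    (measurable_fst.comp measurable_fst).prodMk
      ((measurable_snd.comp measurable_fst).prodMk measurable_snd)
  have hSm : MeasurableSet {q : (ℝ × ℝ) × ℝ | (q.1.1, (q.1.2, q.2)) ∈ T} := hmap hTm
  refine ⟨hSm, ?_⟩
  -- the function p ↦ vol of v-section is measurable
  have hf : Measurable fun p : ℝ × ℝ =>
      volume (Prod.mk p ⁻¹' {q : (ℝ × ℝ) × ℝ | (q.1.1, (q.1.2, q.2)) ∈ T}) :=
    measurable_measure_prodMk_left hSm
  have hbadm : MeasurableSet {p : ℝ × ℝ |
      volume (Prod.mk p ⁻¹' {q : (ℝ × ℝ) × ℝ | (q.1.1, (q.1.2, q.2)) ∈ T}) ≠ 0} :=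
    (hf (measurableSet_singleton 0)).compl
  have hbad0 : volume {p : ℝ × ℝ |
      volume (Prod.mk p ⁻¹' {q : (ℝ × ℝ) × ℝ | (q.1.1, (q.1.2, q.2)) ∈ T}) ≠ 0} = 0 := by
    refine prodNull hbadm ?_
    obtain ⟨_, hsl⟩ := sliceNull hTm hT0
    filter_upwards [aeNotMem hsl] with lam hlam
    have hTl0 : volume {p2 : ℝ × ℝ | (lam, p2) ∈ T} = 0 := by
      by_contra hcon; exact hlam hcon
    have hTlm : MeasurableSet {p2 : ℝ × ℝ | (lam, p2) ∈ T} := measurable_prodMk_left hTm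
    obtain ⟨_, h2⟩ := sliceNull hTlm hTl0
    exact measure_mono_null (fun x hx => hx) h2
  refine prodNull hSm ?_
  filter_upwards [aeNotMem hbad0] with p hp
  by_contra hcon
  exact hp hcon

lemma slice3 {T : Set (ℝ × (ℝ × ℝ))} (hTm : MeasurableSet T) (hT0 : volume T = 0) :
    MeasurableSet {p : ℝ × ℝ | volume {v : ℝ | (p.1, (p.2, v)) ∈ T} ≠ 0} ∧
      volume {p : ℝ × ℝ | volume {v : ℝ | (p.1, (p.2, v)) ∈ T} ≠ 0} = 0 := by
  obtain ⟨hSm, hS0⟩ := assocS hTm hT0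
  exact sliceNull hSm hS0

/-- slicing over the *last* coordinate -/
lemma slice3' {T : Set (ℝ × (ℝ × ℝ))} (hTm : MeasurableSet T) (hT0 : volume T = 0) :
    MeasurableSet {v : ℝ | volume {p : ℝ × ℝ | (p.1, (p.2, v)) ∈ T} ≠ 0} ∧
      volume {v : ℝ | volume {p : ℝ × ℝ | (p.1, (p.2, v)) ∈ T} ≠ 0} = 0 := by
  obtain ⟨hSm, hS0⟩ := assocS hTm hT0
  have hWm : MeasurableSet {w : ℝ × (ℝ × ℝ) |
      (w.2, w.1) ∈ {q : (ℝ × ℝ) × ℝ | (q.1.1, (q.1.2, q.2)) ∈ T}} := by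
    exact (measurable_snd.prodMk measurable_fst) hSm
  have hW0 : volume {w : ℝ × (ℝ × ℝ) |
      (w.2, w.1) ∈ {q : (ℝ × ℝ) × ℝ | (q.1.1, (q.1.2, q.2)) ∈ T}} = 0 :=
    swapNullG hSm hS0
  exact sliceNull hWm hW0

end DB

set_option maxHeartbeats 2000000 in
open DB in
theorem stmt_5 (a b c d : ℝ → ℝ)
    (M : Set (ℝ × ℝ)) (hM : MeasurableSet M) (hM0 : volume M = 0)
    (heq : ∀ x y : ℝ, 0 < x → 0 < y → (x, y) ∉ M →
      a x + b y = c (x + y) + d (x / y)) :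
    ∃ A La Lb : ℝ → ℝ, ∃ α β γ : ℝ,
      (∀ x y : ℝ, 0 < x → 0 < y → A (x + y) = A x + A y) ∧
      (∀ x y : ℝ, 0 < x → 0 < y → La (x * y) = La x + La y) ∧
      (∀ x y : ℝ, 0 < x → 0 < y → Lb (x * y) = Lb x + Lb y) ∧
      (∀ᵐ x : ℝ ∂volume, x ∈ Ioi (0 : ℝ) →
        a x = A x + La x + α ∧
        b x = A x + Lb x + β ∧
        c x = A x + La x + Lb x + γ ∧
        d x = La (x / (x + 1)) - Lb (x + 1) + α + β - γ) := by
  classical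
  set e : ℝ → ℝ := fun x => a x - b x with hedef
  clear_value e
  set ψ : ℝ → ℝ := fun r => d r - d r⁻¹ with hψdef
  clear_value ψ
  set G1 : Set (ℝ × ℝ) := M ∪ Prod.swap ⁻¹' M with hG1def
  have hG1m : MeasurableSet G1 := hM.union (measurable_swap hM)
  have hG1_0 : volume G1 = 0 := measure_union_null hM0 (swapNull hM hM0)
  have F1 : ∀ x y : ℝ, 0 < x → 0 < y → (x, y) ∉ G1 → e x - e y = ψ (x / y) := by
    intro x y hx hy hxy
    have h1 : (x, y) ∉ M := fun h => hxy (Or.inl h)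
    have h2 : (y, x) ∉ M := fun h => hxy (Or.inr h)
    have e1 := heq x y hx hy h1
    have e2 := heq y x hy hx h2
    rw [add_comm y x] at e2
    simp only [hedef, hψdef]
    rw [inv_div]
    linarith
  have F2 : ∃ T : Set (ℝ × ℝ), MeasurableSet T ∧ volume T = 0 ∧
      ∀ r₁ r₂ : ℝ, 0 < r₁ → 0 < r₂ → (r₁, r₂) ∉ T → ψ (r₁ * r₂) = ψ r₁ + ψ r₂ := by
    have hG1swm : MeasurableSet (Prod.swap ⁻¹' G1) := measurable_swap hG1m
    have hG1sw0 : volume (Prod.swap ⁻¹' G1) = 0 := swapNull hG1m hG1_0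
    have hDm : MeasurableSet {p : ℝ × ℝ | (p.1 * p.2, p.1) ∈ G1} :=
      ((measurable_fst.mul measurable_snd).prodMk measurable_fst) hG1m
    have hD0 : volume {p : ℝ × ℝ | (p.1 * p.2, p.1) ∈ G1} = 0 := by
      have h1 := secNull2 (g := fun w : ℝ => w) (h := fun w s : ℝ => w * s) hG1swm hG1sw0
        measurable_id (by exact measurable_fst.mul measurable_snd) npp_id
        (by filter_upwards [aeNZ] with t ht; exact npp_mul_left ht)
      exact measure_mono_null (fun p hp => hp) h1
    have hDswm : MeasurableSet {p : ℝ × ℝ | (p.2 * p.1, p.2) ∈ G1} :=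
      ((measurable_snd.mul measurable_fst).prodMk measurable_snd) hG1m
    have hDsw0 : volume {p : ℝ × ℝ | (p.2 * p.1, p.2) ∈ G1} = 0 := by
      have := swapNull hDm hD0
      exact measure_mono_null (fun p hp => hp) this
    obtain ⟨hSDm, hSD0⟩ := sliceNull hDswm hDsw0
    -- the three 3D bad sets
    set U1 : Set (ℝ × (ℝ × ℝ)) :=
      {w : ℝ × (ℝ × ℝ) | ((w.2.1 * w.2.2) * w.1, w.2.1 * w.2.2) ∈ G1} with hU1def
    have hU1m : MeasurableSet U1 := by
      apply MeasurableSet.preimage hG1m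
      exact (((measurable_fst.comp measurable_snd).mul
        (measurable_snd.comp measurable_snd)).mul measurable_fst).prodMk
        ((measurable_fst.comp measurable_snd).mul (measurable_snd.comp measurable_snd))
    have hU1_0 : volume U1 = 0 := by
      refine prodNull hU1m ?_
      filter_upwards [aeNotMem hSD0] with r₁ hr₁
      have hCm : MeasurableSet {v : ℝ | (v * r₁, v) ∈ G1} :=
        ((measurable_id.mul measurable_const).prodMk measurable_id) hG1m
      have hC0 : volume {v : ℝ | (v * r₁, v) ∈ G1} = 0 := by
        by_contra hcon; exact hr₁ hcon
      have h1 := secNull1 (Z := {v : ℝ | (v * r₁, v) ∈ G1}) hCm hC0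
        (h := fun r₂ y : ℝ => r₂ * y) (by exact measurable_fst.mul measurable_snd)
        (by filter_upwards [aeNZ] with t ht; exact npp_mul_left ht)
      exact measure_mono_null (fun p hp => hp) h1
    set U2 : Set (ℝ × (ℝ × ℝ)) :=
      {w : ℝ × (ℝ × ℝ) | (w.2.2 * w.2.1, w.2.2) ∈ G1} with hU2def
    have hU2m : MeasurableSet U2 := by
      apply MeasurableSet.preimage hG1m
      exact (((measurable_snd.comp measurable_snd).mul
        (measurable_fst.comp measurable_snd)).prodMk
        (measurable_snd.comp measurable_snd))
    have hU2_0 : volume U2 = 0 := by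
      refine prodNull hU2m ?_
      filter_upwards with r₁
      have := swapNull hDm hD0
      exact measure_mono_null (fun p hp => hp) this
    set U3 : Set (ℝ × (ℝ × ℝ)) :=
      {w : ℝ × (ℝ × ℝ) | ((w.2.2 * w.1) * w.2.1, w.2.2) ∈ G1} with hU3def
    have hU3m : MeasurableSet U3 := by
      apply MeasurableSet.preimage hG1m
      exact ((((measurable_snd.comp measurable_snd).mul measurable_fst).mul
        (measurable_fst.comp measurable_snd)).prodMk
        (measurable_snd.comp measurable_snd))
    have hU3_0 : volume U3 = 0 := by
      refine prodNull hU3m ?_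
      filter_upwards [aeNZ] with r₁ hr₁
      -- inner set {(r₂,y) | ((y*r₁)*r₂, y) ∈ G1}
      have h1 := secNull2 (g := fun y : ℝ => y) (h := fun y s : ℝ => (y * r₁) * s)
        hG1swm hG1sw0 measurable_id
        (by exact (measurable_fst.mul measurable_const).mul measurable_snd) npp_id
        (by filter_upwards [aeNZ] with t ht; exact npp_mul_left (mul_ne_zero ht hr₁))
      have h1m : MeasurableSet {p : ℝ × ℝ |
          ((fun y : ℝ => y) p.1, ((fun y s : ℝ => (y * r₁) * s)) p.1 p.2) ∈ Prod.swap ⁻¹' G1} := by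
        apply MeasurableSet.preimage hG1swm
        exact measurable_fst.prodMk ((measurable_fst.mul measurable_const).mul measurable_snd)
      have h2 := swapNull h1m h1
      exact measure_mono_null (fun p hp => hp) h2
    set U : Set (ℝ × (ℝ × ℝ)) := U1 ∪ (U2 ∪ U3) with hUdef
    have hUm : MeasurableSet U := hU1m.union (hU2m.union hU3m)
    have hU0 : volume U = 0 := measure_union_null hU1_0 (measure_union_null hU2_0 hU3_0)
    obtain ⟨hTm', hT0'⟩ := slice3 hUm hU0
    refine ⟨{p : ℝ × ℝ | volume {v : ℝ | (p.1, (p.2, v)) ∈ U} ≠ 0}, hTm', hT0', ?_⟩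
    intro r₁ r₂ hr₁ hr₂ hrT
    have hsec : volume {v : ℝ | (r₁, (r₂, v)) ∈ U} = 0 := by
      by_contra hcon; exact hrT hcon
    have hIne : volume (Ioi (0:ℝ)) ≠ 0 := by rw [Real.volume_Ioi]; exact ENNReal.top_ne_zero
    obtain ⟨y, hyI, hyg⟩ := pick hIne hsec
    rw [mem_Ioi] at hyI
    have hnU1 : ((r₂ * y) * r₁, r₂ * y) ∉ G1 := fun h => hyg (Or.inl h)
    have hnU2 : (y * r₂, y) ∉ G1 := fun h => hyg (Or.inr (Or.inl h))
    have hnU3 : ((y * r₁) * r₂, y) ∉ G1 := fun h => hyg (Or.inr (Or.inr h))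
    have hry : r₂ * y ≠ 0 := ne_of_gt (mul_pos hr₂ hyI)
    have hy0 : y ≠ 0 := ne_of_gt hyI
    have E1 := F1 ((r₂ * y) * r₁) (r₂ * y) (mul_pos (mul_pos hr₂ hyI) hr₁)
      (mul_pos hr₂ hyI) hnU1
    have hq1 : ((r₂ * y) * r₁) / (r₂ * y) = r₁ := by field_simp
    rw [hq1] at E1
    have E2 := F1 (y * r₂) y (mul_pos hyI hr₂) hyI hnU2
    have hq2 : (y * r₂) / y = r₂ := by field_simp
    rw [hq2] at E2
    have hc2 : y * r₂ = r₂ * y := by ring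
    rw [hc2] at E2
    have E3 := F1 ((y * r₁) * r₂) y (mul_pos (mul_pos hyI hr₁) hr₂) hyI hnU3
    have hq3 : ((y * r₁) * r₂) / y = r₁ * r₂ := by field_simp
    rw [hq3] at E3
    have hc3 : (y * r₁) * r₂ = (r₂ * y) * r₁ := by ring
    rw [hc3] at E3
    linarith
  obtain ⟨T, hTm, hT0, hT⟩ := F2
  obtain ⟨Lψ, hLψmul, Zψ, hZψm, hZψ0, hZψ⟩ := deBruijnMul hTm hT0 hT
  have logDiv : ∀ L : ℝ → ℝ, (∀ x y : ℝ, 0 < x → 0 < y → L (x * y) = L x + L y) →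
      ∀ u v : ℝ, 0 < u → 0 < v → L (u / v) = L u - L v := by
    intro L hL u v hu hv
    have h1 : L ((u / v) * v) = L (u / v) + L v := hL _ _ (div_pos hu hv) hv
    rw [div_mul_cancel₀ _ (ne_of_gt hv)] at h1
    linarith
  have hIne : volume (Ioi (0:ℝ)) ≠ 0 := by rw [Real.volume_Ioi]; exact ENNReal.top_ne_zero
  have F3 : ∃ κ : ℝ, ∃ Z3 : Set ℝ, MeasurableSet Z3 ∧ volume Z3 = 0 ∧
      ∀ x, 0 < x → x ∉ Z3 → e x = Lψ x + κ := by
    have hQm : MeasurableSet {p : ℝ × ℝ | p.2 / p.1 ∈ Zψ} :=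
      (measurable_snd.div measurable_fst) hZψm
    have hQ0 : volume {p : ℝ × ℝ | p.2 / p.1 ∈ Zψ} = 0 := by
      have h1 := secNull1 (Z := Zψ) hZψm hZψ0 (h := fun t s : ℝ => s / t)
        (by exact measurable_snd.div measurable_fst)
        (by filter_upwards [aeNZ] with t ht; exact npp_div_const ht)
      exact measure_mono_null (fun p hp => hp) h1
    set G3 : Set (ℝ × ℝ) := G1 ∪ {p : ℝ × ℝ | (p.2, p.1) ∈ {r : ℝ × ℝ | r.2 / r.1 ∈ Zψ}}
      with hG3def
    have hG3m : MeasurableSet G3 :=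
      hG1m.union ((measurable_snd.prodMk measurable_fst) hQm)
    have hG3_0 : volume G3 = 0 := measure_union_null hG1_0 (swapNull hQm hQ0)
    have hG3swm : MeasurableSet {p : ℝ × ℝ | (p.2, p.1) ∈ G3} :=
      (measurable_snd.prodMk measurable_fst) hG3m
    have hG3sw0 : volume {p : ℝ × ℝ | (p.2, p.1) ∈ G3} = 0 := swapNull hG3m hG3_0
    obtain ⟨hSm, hS0⟩ := sliceNull hG3swm hG3sw0
    obtain ⟨y₀, hy₀I, hy₀g⟩ := pick hIne hS0
    rw [mem_Ioi] at hy₀I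
    have hsec : volume {v : ℝ | (y₀, v) ∈ {p : ℝ × ℝ | (p.2, p.1) ∈ G3}} = 0 := by
      by_contra hcon; exact hy₀g hcon
    refine ⟨e y₀ - Lψ y₀, {v : ℝ | (y₀, v) ∈ {p : ℝ × ℝ | (p.2, p.1) ∈ G3}},
      measurable_prodMk_left hG3swm, hsec, ?_⟩
    intro x hx hxZ
    have hmem : (x, y₀) ∉ G3 := hxZ
    have h1 : (x, y₀) ∉ G1 := fun h => hmem (Or.inl h)
    have h2 : x / y₀ ∉ Zψ := fun h => hmem (Or.inr h)
    have E := F1 x y₀ hx hy₀I h1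
    have Eψ := hZψ (x / y₀) (div_pos hx hy₀I) h2
    have Ed := logDiv Lψ hLψmul x y₀ hx hy₀I
    linarith
  obtain ⟨κ, Z3, hZ3m, hZ3_0, hZ3⟩ := F3
  set c₁ : ℝ → ℝ := fun s => c s + Lψ s + κ with hc₁def
  clear_value c₁
  set D₁ : ℝ → ℝ := fun u => d (u / (1 - u)) + Lψ (1 - u) with hD₁def
  clear_value D₁
  set G4 : Set (ℝ × ℝ) := M ∪ {p : ℝ × ℝ | p.2 ∈ Z3} with hG4def
  have hG4m : MeasurableSet G4 := hM.union (measurable_snd hZ3m)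
  have hG4_0 : volume G4 = 0 := measure_union_null hM0 (sndNull hZ3m hZ3_0)
  have F4 : ∀ x y : ℝ, 0 < x → 0 < y → (x, y) ∉ G4 →
      a x + a y = c₁ (x + y) + D₁ (x / (x + y)) := by
    intro x y hx hy hxy
    have h1 : (x, y) ∉ M := fun h => hxy (Or.inl h)
    have h2 : y ∉ Z3 := fun h => hxy (Or.inr h)
    have E := heq x y hx hy h1
    have E2 := hZ3 y hy h2
    simp only [hedef] at E2
    have hs : 0 < x + y := by linarith
    have hsne : x + y ≠ 0 := ne_of_gt hs
    simp only [hc₁def, hD₁def]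
    have r1 : 1 - x / (x + y) = y / (x + y) := by field_simp; ring
    rw [r1]
    have hyne : y ≠ 0 := ne_of_gt hy
    have r2 : (x / (x + y)) / (y / (x + y)) = x / y := by
      field_simp
    rw [r2]
    have r3 : Lψ (x + y) + Lψ (y / (x + y)) = Lψ y := by
      have h3 := hLψmul (x + y) (y / (x + y)) hs (div_pos hy hs)
      have harg : (x + y) * (y / (x + y)) = y := by field_simp
      rw [harg] at h3
      linarith
    linarith
  set η : ℝ → ℝ := fun x => a (2 * x) - a x with hηdef
  clear_value η
  have F5 : ∃ G5 : Set (ℝ × ℝ), MeasurableSet G5 ∧ volume G5 = 0 ∧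
      ∀ x y : ℝ, 0 < x → 0 < y → (x, y) ∉ G5 →
        η x + η y = (fun s => c₁ (2 * s) - c₁ s) (x + y) := by
    have hGsm : MeasurableSet {p : ℝ × ℝ | ((2:ℝ) * p.1, (2:ℝ) * p.2) ∈ G4} :=
      ((measurable_const.mul measurable_fst).prodMk
        (measurable_const.mul measurable_snd)) hG4m
    have hGs0 : volume {p : ℝ × ℝ | ((2:ℝ) * p.1, (2:ℝ) * p.2) ∈ G4} = 0 := by
      have h1 := secNull2 (g := fun t : ℝ => 2 * t) (h := fun _ s : ℝ => 2 * s) hG4m hG4_0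
        (by exact measurable_const.mul measurable_id)
        (by exact measurable_const.mul measurable_snd)
        (npp_mul_left two_ne_zero)
        (by filter_upwards with t; exact npp_mul_left two_ne_zero)
      exact measure_mono_null (fun p hp => hp) h1
    refine ⟨G4 ∪ {p : ℝ × ℝ | ((2:ℝ) * p.1, (2:ℝ) * p.2) ∈ G4}, hG4m.union hGsm,
      measure_union_null hG4_0 hGs0, ?_⟩
    intro x y hx hy hxy
    have h1 : (x, y) ∉ G4 := fun h => hxy (Or.inl h)
    have h2 : (2 * x, 2 * y) ∉ G4 := fun h => hxy (Or.inr h)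
    have E1 := F4 x y hx hy h1
    have E2 := F4 (2 * x) (2 * y) (by linarith) (by linarith) h2
    have r1 : 2 * x + 2 * y = 2 * (x + y) := by ring
    rw [r1] at E2
    have r2 : (2 * x) / (2 * (x + y)) = x / (x + y) :=
      mul_div_mul_left x (x + y) two_ne_zero
    rw [r2] at E2
    simp only [hηdef]
    linarith
  obtain ⟨G5, hG5m, hG5_0, hG5⟩ := F5
  obtain ⟨A, m2, hAadd, Zη, hZηm, hZη0, hZη⟩ := pexider (g := η) (h := fun s => c₁ (2 * s) - c₁ s) hG5m hG5_0 hG5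
  have F6 : ∃ T6 : Set (ℝ × (ℝ × ℝ)), MeasurableSet T6 ∧ volume T6 = 0 ∧
      ∀ l x y : ℝ, 0 < l → 0 < x → 0 < y → (l, (x, y)) ∉ T6 →
        (a (l * x) - a x) + (a (l * y) - a y) = c₁ (l * (x + y)) - c₁ (x + y) := by
    set K1 : Set (ℝ × (ℝ × ℝ)) := {w : ℝ × (ℝ × ℝ) | (w.2.1, w.2.2) ∈ G4} with hK1def
    have hK1m : MeasurableSet K1 :=
      ((measurable_fst.comp measurable_snd).prodMk
        (measurable_snd.comp measurable_snd)) hG4m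
    have hK1_0 : volume K1 = 0 := by
      refine prodNull hK1m ?_
      filter_upwards with l
      exact measure_mono_null (fun p hp => hp) hG4_0
    set K2 : Set (ℝ × (ℝ × ℝ)) :=
      {w : ℝ × (ℝ × ℝ) | (w.1 * w.2.1, w.1 * w.2.2) ∈ G4} with hK2def
    have hK2m : MeasurableSet K2 :=
      ((measurable_fst.mul (measurable_fst.comp measurable_snd)).prodMk
        (measurable_fst.mul (measurable_snd.comp measurable_snd))) hG4m
    have hK2_0 : volume K2 = 0 := by
      refine prodNull hK2m ?_
      filter_upwards [aeNZ] with l hl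
      have h1 := secNull2 (g := fun t : ℝ => l * t) (h := fun _ s : ℝ => l * s) hG4m hG4_0
        (by exact measurable_const.mul measurable_id)
        (by exact measurable_const.mul measurable_snd)
        (npp_mul_left hl)
        (by filter_upwards with t; exact npp_mul_left hl)
      exact measure_mono_null (fun p hp => hp) h1
    refine ⟨K1 ∪ K2, hK1m.union hK2m, measure_union_null hK1_0 hK2_0, ?_⟩
    intro l x y hl hx hy hw
    have h1 : (x, y) ∉ G4 := fun h => hw (Or.inl h)
    have h2 : (l * x, l * y) ∉ G4 := fun h => hw (Or.inr h)
    have E1 := F4 x y hx hy h1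
    have E2 := F4 (l * x) (l * y) (mul_pos hl hx) (mul_pos hl hy) h2
    have r1 : l * x + l * y = l * (x + y) := by ring
    rw [r1] at E2
    have r2 : (l * x) / (l * (x + y)) = x / (x + y) :=
      mul_div_mul_left x (x + y) (ne_of_gt hl)
    rw [r2] at E2
    linarith
  obtain ⟨T6, hT6m, hT6_0, hT6⟩ := F6
  have F8d : ∃ W : Set (ℝ × ℝ), MeasurableSet W ∧ volume W = 0 ∧
      ∀ l x : ℝ, 0 < l → 0 < x → (l, x) ∉ W →
        (a (l * (2 * x)) - a (2 * x)) - (a (l * x) - a x) = A (l * x) - A x := by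
    have hW1m : MeasurableSet {p : ℝ × ℝ | p.1 * p.2 ∈ Zη} :=
      (measurable_fst.mul measurable_snd) hZηm
    have hW1_0 : volume {p : ℝ × ℝ | p.1 * p.2 ∈ Zη} = 0 := by
      have h1 := secNull1 (Z := Zη) hZηm hZη0 (h := fun t s : ℝ => t * s)
        (by exact measurable_fst.mul measurable_snd)
        (by filter_upwards [aeNZ] with t ht; exact npp_mul_left ht)
      exact measure_mono_null (fun p hp => hp) h1
    refine ⟨{p : ℝ × ℝ | p.1 * p.2 ∈ Zη} ∪ {p : ℝ × ℝ | p.2 ∈ Zη},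
      hW1m.union (measurable_snd hZηm),
      measure_union_null hW1_0 (sndNull hZηm hZη0), ?_⟩
    intro l x hl hx hw
    have h1 : l * x ∉ Zη := fun h => hw (Or.inl h)
    have h2 : x ∉ Zη := fun h => hw (Or.inr h)
    have E1 := hZη (l * x) (mul_pos hl hx) h1
    have E2 := hZη x hx h2
    simp only [hηdef] at E1 E2
    have hc : l * (2 * x) = 2 * (l * x) := by ring
    rw [hc]
    linarith
  obtain ⟨W8, hW8m, hW8_0, hW8⟩ := F8d
  have F8f : ∃ T8 : Set (ℝ × (ℝ × ℝ)), MeasurableSet T8 ∧ volume T8 = 0 ∧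
      ∀ l x y : ℝ, 0 < l → 0 < x → 0 < y → (l, (x, y)) ∉ T8 →
        (c₁ (l * (2 * x + y)) - c₁ (2 * x + y)) - (c₁ (l * (x + y)) - c₁ (x + y)) =
          A (l * x) - A x := by
    obtain ⟨hST6m, hST6_0⟩ := sliceNull hT6m hT6_0
    obtain ⟨hSW8m, hSW8_0⟩ := sliceNull hW8m hW8_0
    set P1 : Set (ℝ × (ℝ × ℝ)) :=
      {w : ℝ × (ℝ × ℝ) | (w.1, ((2:ℝ) * w.2.1, w.2.2)) ∈ T6} with hP1def
    have hP1m : MeasurableSet P1 := by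
      apply MeasurableSet.preimage hT6m
      exact measurable_fst.prodMk
        ((measurable_const.mul (measurable_fst.comp measurable_snd)).prodMk
          (measurable_snd.comp measurable_snd))
    have hP1_0 : volume P1 = 0 := by
      refine prodNull hP1m ?_
      filter_upwards [aeNotMem hST6_0] with l hl
      have hT6l0 : volume {p2 : ℝ × ℝ | (l, p2) ∈ T6} = 0 := by
        by_contra hcon; exact hl hcon
      have hT6lm : MeasurableSet {p2 : ℝ × ℝ | (l, p2) ∈ T6} := measurable_prodMk_left hT6m
      have h1 := secNull2 (g := fun t : ℝ => 2 * t) (h := fun _ s : ℝ => s) hT6lm hT6l0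
        (by exact measurable_const.mul measurable_id) (by exact measurable_snd)
        (npp_mul_left two_ne_zero) (by filter_upwards with t; exact npp_id)
      exact measure_mono_null (fun p hp => hp) h1
    set P3 : Set (ℝ × (ℝ × ℝ)) := {w : ℝ × (ℝ × ℝ) | (w.1, w.2.1) ∈ W8} with hP3def
    have hP3m : MeasurableSet P3 := by
      apply MeasurableSet.preimage hW8m
      exact measurable_fst.prodMk (measurable_fst.comp measurable_snd)
    have hP3_0 : volume P3 = 0 := by
      refine prodNull hP3m ?_
      filter_upwards [aeNotMem hSW8_0] with l hl
      have hW8l0 : volume {v : ℝ | (l, v) ∈ W8} = 0 := by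
        by_contra hcon; exact hl hcon
      have hW8lm : MeasurableSet {v : ℝ | (l, v) ∈ W8} := measurable_prodMk_left hW8m
      exact measure_mono_null (fun p hp => hp) (fstNull hW8lm hW8l0)
    refine ⟨P1 ∪ (T6 ∪ P3), hP1m.union (hT6m.union hP3m),
      measure_union_null hP1_0 (measure_union_null hT6_0 hP3_0), ?_⟩
    intro l x y hl hx hy hw
    have h1 : (l, (2 * x, y)) ∉ T6 := fun h => hw (Or.inl h)
    have h2 : (l, (x, y)) ∉ T6 := fun h => hw (Or.inr (Or.inl h))
    have h3 : (l, x) ∉ W8 := fun h => hw (Or.inr (Or.inr h))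
    have E1 := hT6 l (2 * x) y hl (by linarith) hy h1
    have E2 := hT6 l x y hl hx hy h2
    have E3 := hW8 l x hl hx h3
    linarith
  obtain ⟨T8f, hT8fm, hT8f0, hT8f⟩ := F8f
  have F8g : ∃ Tg : Set (ℝ × (ℝ × ℝ)), MeasurableSet Tg ∧ volume Tg = 0 ∧
      ∀ l x s : ℝ, 0 < l → 0 < x → x < s → (l, (x, s)) ∉ Tg →
        (c₁ (l * (x + s)) - c₁ (x + s)) - (c₁ (l * s) - c₁ s) = A (l * x) - A x := by
    obtain ⟨hST8m, hST8_0⟩ := sliceNull hT8fm hT8f0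
    set Tg : Set (ℝ × (ℝ × ℝ)) :=
      {w : ℝ × (ℝ × ℝ) | (w.1, (w.2.1, w.2.2 - w.2.1)) ∈ T8f} with hTgdef
    have hTgm : MeasurableSet Tg := by
      apply MeasurableSet.preimage hT8fm
      exact measurable_fst.prodMk
        ((measurable_fst.comp measurable_snd).prodMk
          ((measurable_snd.comp measurable_snd).sub (measurable_fst.comp measurable_snd)))
    have hTg0 : volume Tg = 0 := by
      refine prodNull hTgm ?_
      filter_upwards [aeNotMem hST8_0] with l hl
      have hTl0 : volume {p2 : ℝ × ℝ | (l, p2) ∈ T8f} = 0 := by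
        by_contra hcon; exact hl hcon
      have hTlm : MeasurableSet {p2 : ℝ × ℝ | (l, p2) ∈ T8f} := measurable_prodMk_left hT8fm
      have h1 := secNull2 (g := fun t : ℝ => t) (h := fun t s : ℝ => s - t) hTlm hTl0
        measurable_id (by exact measurable_snd.sub measurable_fst) npp_id
        (by filter_upwards with t; exact npp_sub_right t)
      exact measure_mono_null (fun p hp => hp) h1
    refine ⟨Tg, hTgm, hTg0, ?_⟩
    intro l x s hl hx hxs hw
    have h1 : (l, (x, s - x)) ∉ T8f := hw
    have E := hT8f l x (s - x) hl hx (by linarith) h1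
    have r1 : 2 * x + (s - x) = x + s := by ring
    have r2 : x + (s - x) = s := by ring
    rw [r1, r2] at E
    exact E
  obtain ⟨T8g, hT8gm, hT8g0, hT8g⟩ := F8g
  have F8e : ∃ Te : Set (ℝ × (ℝ × ℝ)), MeasurableSet Te ∧ volume Te = 0 ∧
      ∀ l dl u : ℝ, 0 < l → 0 < dl → 0 < u → (l, (dl, u)) ∉ Te →
        (a (l * (dl + u)) - a (dl + u)) - (a (l * u) - a u) = A (l * dl) - A dl := by
    obtain ⟨hBm, hB0⟩ := slice3 hT6m hT6_0
    obtain ⟨hB'm, hB'0⟩ := slice3 hT8gm hT8g0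
    obtain ⟨hSBm, hSB0⟩ := sliceNull hBm hB0
    obtain ⟨hSB'm, hSB'0⟩ := sliceNull hB'm hB'0
    set B : Set (ℝ × ℝ) := {p : ℝ × ℝ | volume {v : ℝ | (p.1, (p.2, v)) ∈ T6} ≠ 0} with hBdef
    set B' : Set (ℝ × ℝ) := {p : ℝ × ℝ | volume {v : ℝ | (p.1, (p.2, v)) ∈ T8g} ≠ 0} with hB'def
    set BAD1 : Set (ℝ × (ℝ × ℝ)) :=
      {w : ℝ × (ℝ × ℝ) | (w.1, w.2.1 + w.2.2) ∈ B} with hBAD1def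
    have hBAD1m : MeasurableSet BAD1 := by
      apply MeasurableSet.preimage hBm
      exact measurable_fst.prodMk
        ((measurable_fst.comp measurable_snd).add (measurable_snd.comp measurable_snd))
    have hBAD1_0 : volume BAD1 = 0 := by
      refine prodNull hBAD1m ?_
      filter_upwards [aeNotMem hSB0] with l hl
      have hBl0 : volume {v : ℝ | (l, v) ∈ B} = 0 := by
        by_contra hcon; exact hl hcon
      have hBlm : MeasurableSet {v : ℝ | (l, v) ∈ B} := measurable_prodMk_left hBm
      have h1 := secNull1 (Z := {v : ℝ | (l, v) ∈ B}) hBlm hBl0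
        (h := fun t s : ℝ => t + s) (by exact measurable_fst.add measurable_snd)
        (by filter_upwards with t; exact npp_add_left t)
      exact measure_mono_null (fun p hp => hp) h1
    set BAD2 : Set (ℝ × (ℝ × ℝ)) := {w : ℝ × (ℝ × ℝ) | (w.1, w.2.2) ∈ B} with hBAD2def
    have hBAD2m : MeasurableSet BAD2 := by
      apply MeasurableSet.preimage hBm
      exact measurable_fst.prodMk (measurable_snd.comp measurable_snd)
    have hBAD2_0 : volume BAD2 = 0 := by
      refine prodNull hBAD2m ?_
      filter_upwards [aeNotMem hSB0] with l hl
      have hBl0 : volume {v : ℝ | (l, v) ∈ B} = 0 := by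
        by_contra hcon; exact hl hcon
      have hBlm : MeasurableSet {v : ℝ | (l, v) ∈ B} := measurable_prodMk_left hBm
      exact measure_mono_null (fun p hp => hp) (sndNull hBlm hBl0)
    set BAD3 : Set (ℝ × (ℝ × ℝ)) := {w : ℝ × (ℝ × ℝ) | (w.1, w.2.1) ∈ B'} with hBAD3def
    have hBAD3m : MeasurableSet BAD3 := by
      apply MeasurableSet.preimage hB'm
      exact measurable_fst.prodMk (measurable_fst.comp measurable_snd)
    have hBAD3_0 : volume BAD3 = 0 := by
      refine prodNull hBAD3m ?_
      filter_upwards [aeNotMem hSB'0] with l hl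
      have hBl0 : volume {v : ℝ | (l, v) ∈ B'} = 0 := by
        by_contra hcon; exact hl hcon
      have hBlm : MeasurableSet {v : ℝ | (l, v) ∈ B'} := measurable_prodMk_left hB'm
      exact measure_mono_null (fun p hp => hp) (fstNull hBlm hBl0)
    refine ⟨BAD1 ∪ (BAD2 ∪ BAD3), hBAD1m.union (hBAD2m.union hBAD3m),
      measure_union_null hBAD1_0 (measure_union_null hBAD2_0 hBAD3_0), ?_⟩
    intro l dl u hl hdl hu hw
    have h1 : (l, dl + u) ∉ B := fun h => hw (Or.inl h)
    have h2 : (l, u) ∉ B := fun h => hw (Or.inr (Or.inl h))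
    have h3 : (l, dl) ∉ B' := fun h => hw (Or.inr (Or.inr h))
    have S1 : volume {v : ℝ | (l, (dl + u, v)) ∈ T6} = 0 := by
      by_contra hcon; exact h1 hcon
    have S2 : volume {v : ℝ | (l, (u, v)) ∈ T6} = 0 := by
      by_contra hcon; exact h2 hcon
    have S3' : volume {v : ℝ | (l, (dl, v)) ∈ T8g} = 0 := by
      by_contra hcon; exact h3 hcon
    have S3 : volume {v : ℝ | (l, (dl, u + v)) ∈ T8g} = 0 := by
      have h4 := npp_add_left u _ S3'
      exact measure_mono_null (fun v hv => hv) h4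
    have hIne2 : volume (Ioi dl) ≠ 0 := by rw [Real.volume_Ioi]; exact ENNReal.top_ne_zero
    obtain ⟨v, hvI, hvg⟩ := pick hIne2
      (measure_union_null S1 (measure_union_null S2 S3))
    rw [mem_Ioi] at hvI
    have hv0 : 0 < v := lt_trans hdl hvI
    have g1 : (l, (dl + u, v)) ∉ T6 := fun h => hvg (Or.inl h)
    have g2 : (l, (u, v)) ∉ T6 := fun h => hvg (Or.inr (Or.inl h))
    have g3 : (l, (dl, u + v)) ∉ T8g := fun h => hvg (Or.inr (Or.inr h))
    have E1 := hT6 l (dl + u) v hl (by linarith) hv0 g1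
    have E2 := hT6 l u v hl hu hv0 g2
    have E3 := hT8g l dl (u + v) hl hdl (by linarith) g3
    have hr : (dl + u) + v = dl + (u + v) := by ring
    rw [hr] at E1
    linarith
  obtain ⟨T8e, hT8em, hT8e0, hT8e⟩ := F8e
  have F8a : ∃ Ta : Set (ℝ × (ℝ × ℝ)), MeasurableSet Ta ∧ volume Ta = 0 ∧
      ∀ l x x' : ℝ, 0 < l → 0 < x → 0 < x' → (l, (x, x')) ∉ Ta →
        (a (l * x) - a x) - (A (l * x) - A x) =
          (a (l * x') - a x') - (A (l * x') - A x') := by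
    obtain ⟨hSTem, hSTe0⟩ := sliceNull hT8em hT8e0
    set R : Set (ℝ × (ℝ × ℝ)) :=
      {w : ℝ × (ℝ × ℝ) | (w.1, (w.2.1 - w.2.2, w.2.2)) ∈ T8e} with hRdef
    have hRm : MeasurableSet R := by
      apply MeasurableSet.preimage hT8em
      exact measurable_fst.prodMk
        (((measurable_fst.comp measurable_snd).sub (measurable_snd.comp measurable_snd)).prodMk
          (measurable_snd.comp measurable_snd))
    have hR0 : volume R = 0 := by
      refine prodNull hRm ?_
      filter_upwards [aeNotMem hSTe0] with l hl
      have hTl0 : volume {p2 : ℝ × ℝ | (l, p2) ∈ T8e} = 0 := by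
        by_contra hcon; exact hl hcon
      have hTlm : MeasurableSet {p2 : ℝ × ℝ | (l, p2) ∈ T8e} := measurable_prodMk_left hT8em
      have hTlswm : MeasurableSet {p2 : ℝ × ℝ | (p2.2, p2.1) ∈ {p2 : ℝ × ℝ | (l, p2) ∈ T8e}} :=
        (measurable_snd.prodMk measurable_fst) hTlm
      have hTlsw0 : volume {p2 : ℝ × ℝ | (p2.2, p2.1) ∈ {p2 : ℝ × ℝ | (l, p2) ∈ T8e}} = 0 :=
        swapNull hTlm hTl0
      have h1 := secNull2 (g := fun t : ℝ => t) (h := fun t s : ℝ => s - t)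
        hTlswm hTlsw0 measurable_id (by exact measurable_snd.sub measurable_fst) npp_id
        (by filter_upwards with t; exact npp_sub_right t)
      have h1m : MeasurableSet {p : ℝ × ℝ |
          ((fun t : ℝ => t) p.1, (fun t s : ℝ => s - t) p.1 p.2) ∈
            {p2 : ℝ × ℝ | (p2.2, p2.1) ∈ {p2 : ℝ × ℝ | (l, p2) ∈ T8e}}} := by
        apply MeasurableSet.preimage hTlswm
        exact measurable_fst.prodMk (measurable_snd.sub measurable_fst)
      have h2 := swapNull h1m h1
      exact measure_mono_null (fun p hp => hp) h2
    obtain ⟨hSRm, hSR0⟩ := sliceNull hRm hR0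
    set Rsw : Set (ℝ × (ℝ × ℝ)) :=
      {w : ℝ × (ℝ × ℝ) | (w.1, (w.2.2, w.2.1)) ∈ R} with hRswdef
    have hRswm : MeasurableSet Rsw := by
      apply MeasurableSet.preimage hRm
      exact measurable_fst.prodMk
        ((measurable_snd.comp measurable_snd).prodMk (measurable_fst.comp measurable_snd))
    have hRsw0 : volume Rsw = 0 := by
      refine prodNull hRswm ?_
      filter_upwards [aeNotMem hSR0] with l hl
      have hRl0 : volume {p2 : ℝ × ℝ | (l, p2) ∈ R} = 0 := by
        by_contra hcon; exact hl hcon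
      have hRlm : MeasurableSet {p2 : ℝ × ℝ | (l, p2) ∈ R} := measurable_prodMk_left hRm
      exact measure_mono_null (fun p hp => hp) (swapNull hRlm hRl0)
    set Dg : Set (ℝ × (ℝ × ℝ)) :=
      {w : ℝ × (ℝ × ℝ) | w.2.1 - w.2.2 ∈ ({0} : Set ℝ)} with hDgdef
    have hDgm : MeasurableSet Dg := by
      apply MeasurableSet.preimage (measurableSet_singleton (0:ℝ))
      exact (measurable_fst.comp measurable_snd).sub (measurable_snd.comp measurable_snd)
    have hDg0 : volume Dg = 0 := by
      refine prodNull hDgm ?_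
      filter_upwards with l
      have h1 := secNull1 (Z := ({0} : Set ℝ)) (measurableSet_singleton 0) Real.volume_singleton
        (h := fun t s : ℝ => t - s) (by exact measurable_fst.sub measurable_snd)
        (by filter_upwards with t; exact npp_neg_add t)
      exact measure_mono_null (fun p hp => hp) h1
    refine ⟨R ∪ (Rsw ∪ Dg), hRm.union (hRswm.union hDgm),
      measure_union_null hR0 (measure_union_null hRsw0 hDg0), ?_⟩
    intro l x x' hl hx hx' hw
    have hR1 : (l, (x - x', x')) ∉ T8e := fun h => hw (Or.inl h)
    have hR2 : (l, (x' - x, x)) ∉ T8e := fun h => hw (Or.inr (Or.inl h))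
    have hne : x - x' ≠ 0 := fun h => hw (Or.inr (Or.inr h))
    rcases lt_trichotomy x' x with hlt | heq | hgt
    · have E := hT8e l (x - x') x' hl (by linarith) hx' hR1
      rw [show (x - x') + x' = x by ring] at E
      have hA1 : A (l * x) = A (l * x') + A (l * (x - x')) := by
        have h := hAadd (l * x') (l * (x - x')) (mul_pos hl hx') (mul_pos hl (by linarith))
        rw [show l * x' + l * (x - x') = l * x by ring] at h
        linarith
      have hA2 : A x = A x' + A (x - x') := by
        have h := hAadd x' (x - x') hx' (by linarith)
        rw [show x' + (x - x') = x by ring] at h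
        linarith
      linarith
    · exact absurd (by rw [heq]; ring) hne
    · have E := hT8e l (x' - x) x hl (by linarith) hx hR2
      rw [show (x' - x) + x = x' by ring] at E
      have hA1 : A (l * x') = A (l * x) + A (l * (x' - x)) := by
        have h := hAadd (l * x) (l * (x' - x)) (mul_pos hl hx) (mul_pos hl (by linarith))
        rw [show l * x + l * (x' - x) = l * x' by ring] at h
        linarith
      have hA2 : A x' = A x + A (x' - x) := by
        have h := hAadd x (x' - x) hx (by linarith)
        rw [show x + (x' - x) = x' by ring] at h
        linarith
      linarith
  obtain ⟨T8a, hT8am, hT8a0, hT8a⟩ := F8a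
  set tA : ℝ → ℝ := fun u => a u - A u with htAdef
  clear_value tA
  have F8b : ∃ Zb2 : Set (ℝ × ℝ), MeasurableSet Zb2 ∧ volume Zb2 = 0 ∧ ∃ mf : ℝ → ℝ,
      ∀ l x : ℝ, 0 < l → 0 < x → (l, x) ∉ Zb2 → tA (l * x) - tA x = mf l := by
    obtain ⟨hSm', hS0'⟩ := slice3' hT8am hT8a0
    obtain ⟨x₀, hx₀I, hx₀g⟩ := pick hIne hS0'
    rw [mem_Ioi] at hx₀I
    have hZ0 : volume {p : ℝ × ℝ | (p.1, (p.2, x₀)) ∈ T8a} = 0 := by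
      by_contra hcon; exact hx₀g hcon
    have hZm : MeasurableSet {p : ℝ × ℝ | (p.1, (p.2, x₀)) ∈ T8a} := by
      apply MeasurableSet.preimage hT8am
      exact measurable_fst.prodMk (measurable_snd.prodMk measurable_const)
    refine ⟨_, hZm, hZ0, fun l => (a (l * x₀) - a x₀) - (A (l * x₀) - A x₀), ?_⟩
    intro l x hl hx hlx
    have E := hT8a l x x₀ hl hx hx₀I hlx
    simp only [htAdef]
    linarith
  obtain ⟨Zb2, hZb2m, hZb2_0, mf, hF8b⟩ := F8b
  have F8m : ∃ q : ℝ, ∃ Tq : Set (ℝ × ℝ), MeasurableSet Tq ∧ volume Tq = 0 ∧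
      ∀ l x : ℝ, 0 < l → 0 < x → (l, x) ∉ Tq →
        (fun u => tA u - q) (l * x) = (fun u => tA u - q) l + (fun u => tA u - q) x := by
    set Zs : Set (ℝ × ℝ) := Zb2 ∪ {p : ℝ × ℝ | (p.2, p.1) ∈ Zb2} with hZsdef
    have hZsm : MeasurableSet Zs :=
      hZb2m.union ((measurable_snd.prodMk measurable_fst) hZb2m)
    have hZs0 : volume Zs = 0 := measure_union_null hZb2_0 (swapNull hZb2m hZb2_0)
    obtain ⟨hSm2, hS02⟩ := sliceNull hZsm hZs0
    obtain ⟨l₀, hl₀I, hl₀g⟩ := pick hIne hS02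
    rw [mem_Ioi] at hl₀I
    have hZq0 : volume {x : ℝ | (l₀, x) ∈ Zs} = 0 := by
      by_contra hcon; exact hl₀g hcon
    have hZqm : MeasurableSet {x : ℝ | (l₀, x) ∈ Zs} := measurable_prodMk_left hZsm
    set q : ℝ := tA l₀ - mf l₀ with hqdef
    have hmf : ∀ x, 0 < x → x ∉ {x : ℝ | (l₀, x) ∈ Zs} → mf x = tA x - q := by
      intro x hx hxZ
      have h1 : (l₀, x) ∉ Zb2 := fun h => hxZ (Or.inl h)
      have h2 : (x, l₀) ∉ Zb2 := fun h => hxZ (Or.inr h)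
      have E1 := hF8b l₀ x hl₀I hx h1
      have E2 := hF8b x l₀ hx hl₀I h2
      rw [show x * l₀ = l₀ * x by ring] at E2
      simp only [hqdef]
      linarith
    refine ⟨q, Zb2 ∪ {p : ℝ × ℝ | p.1 ∈ {x : ℝ | (l₀, x) ∈ Zs}},
      hZb2m.union (measurable_fst hZqm),
      measure_union_null hZb2_0 (fstNull hZqm hZq0), ?_⟩
    intro l x hl hx hlx
    have h1 : (l, x) ∉ Zb2 := fun h => hlx (Or.inl h)
    have h2 : l ∉ {x : ℝ | (l₀, x) ∈ Zs} := fun h => hlx (Or.inr h)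
    have E1 := hF8b l x hl hx h1
    have E2 := hmf l hl h2
    simp only []
    linarith
  obtain ⟨q, Tq, hTqm, hTq0, hTqE⟩ := F8m
  obtain ⟨La, hLamul, ZLa, hZLam, hZLa0, hZLa⟩ := deBruijnMul (F := fun u => tA u - q) hTqm hTq0 hTqE
  have Fa : ∀ x, 0 < x → x ∉ ZLa → a x = A x + La x + q := by
    intro x hx hxZ
    have := hZLa x hx hxZ
    simp only [htAdef] at this
    linarith
  set Lb : ℝ → ℝ := fun u => La u - Lψ u with hLbdef
  clear_value Lb
  have hLbmul : ∀ x y : ℝ, 0 < x → 0 < y → Lb (x * y) = Lb x + Lb y := by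
    intro x y hx hy
    simp only [hLbdef]
    rw [hLamul x y hx hy, hLψmul x y hx hy]
    ring
  set β : ℝ := q - κ with hβdef
  have Fb : ∀ y, 0 < y → y ∉ ZLa ∪ Z3 → b y = A y + Lb y + β := by
    intro y hy hyZ
    have h1 : y ∉ ZLa := fun hc => hyZ (Or.inl hc)
    have h2 : y ∉ Z3 := fun hc => hyZ (Or.inr hc)
    have e1 := Fa y hy h1
    have e2 := hZ3 y hy h2
    simp only [hedef] at e2
    simp only [hLbdef, hβdef]
    linarith
  have Fc : ∃ γ : ℝ, ∃ Zc : Set ℝ, MeasurableSet Zc ∧ volume Zc = 0 ∧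
      ∀ s, 0 < s → s ∉ Zc → c s = A s + La s + Lb s + γ := by
    have hZbm : MeasurableSet (ZLa ∪ Z3) := hZLam.union hZ3m
    have hZb0 : volume (ZLa ∪ Z3) = 0 := measure_union_null hZLa0 hZ3_0
    have hform : ∀ x y : ℝ, 0 < x → 0 < y → (x, y) ∉ M → x ∉ ZLa → y ∉ ZLa ∪ Z3 →
        c (x + y) - A (x + y) - La (x + y) - Lb (x + y) =
          La (x / (x + y)) + Lb (y / (x + y)) - d (x / y) + q + β := by
      intro x y hx hy hm hxa hyb
      have hs : 0 < x + y := by linarith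
      have E := heq x y hx hy hm
      have Ea := Fa x hx hxa
      have Eb := Fb y hy hyb
      have hA := hAadd x y hx hy
      have hLa := logDiv La hLamul x (x + y) hx hs
      have hLb := logDiv Lb hLbmul y (x + y) hy hs
      linarith
    set C1 : Set (ℝ × (ℝ × ℝ)) := {w : ℝ × (ℝ × ℝ) | (w.2.1, w.2.2) ∈ M} with hC1def
    have hC1m : MeasurableSet C1 :=
      ((measurable_fst.comp measurable_snd).prodMk (measurable_snd.comp measurable_snd)) hM
    have hC1_0 : volume C1 = 0 := by
      refine prodNull hC1m ?_
      filter_upwards with l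
      exact measure_mono_null (fun p hp => hp) hM0
    set C2 : Set (ℝ × (ℝ × ℝ)) :=
      {w : ℝ × (ℝ × ℝ) | (w.1 * w.2.1, w.1 * w.2.2) ∈ M} with hC2def
    have hC2m : MeasurableSet C2 :=
      ((measurable_fst.mul (measurable_fst.comp measurable_snd)).prodMk
        (measurable_fst.mul (measurable_snd.comp measurable_snd))) hM
    have hC2_0 : volume C2 = 0 := by
      refine prodNull hC2m ?_
      filter_upwards [aeNZ] with l hl
      have h1 := secNull2 (g := fun t : ℝ => l * t) (h := fun _ s : ℝ => l * s) hM hM0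
        (by exact measurable_const.mul measurable_id)
        (by exact measurable_const.mul measurable_snd)
        (npp_mul_left hl) (by filter_upwards with t; exact npp_mul_left hl)
      exact measure_mono_null (fun p hp => hp) h1
    set C3 : Set (ℝ × (ℝ × ℝ)) := {w : ℝ × (ℝ × ℝ) | w.2.1 ∈ ZLa} with hC3def
    have hC3m : MeasurableSet C3 := (measurable_fst.comp measurable_snd) hZLam
    have hC3_0 : volume C3 = 0 := by
      refine prodNull hC3m ?_
      filter_upwards with l
      exact measure_mono_null (fun p hp => hp) (fstNull hZLam hZLa0)
    set C4 : Set (ℝ × (ℝ × ℝ)) := {w : ℝ × (ℝ × ℝ) | w.1 * w.2.1 ∈ ZLa} with hC4def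
    have hC4m : MeasurableSet C4 := (measurable_fst.mul (measurable_fst.comp measurable_snd)) hZLam
    have hC4_0 : volume C4 = 0 := by
      refine prodNull hC4m ?_
      filter_upwards [aeNZ] with l hl
      have hpre : volume ((fun t : ℝ => l * t) ⁻¹' ZLa) = 0 := npp_mul_left hl _ hZLa0
      have hprem : MeasurableSet ((fun t : ℝ => l * t) ⁻¹' ZLa) :=
        hZLam.preimage (measurable_const.mul measurable_id)
      exact measure_mono_null (fun p hp => hp) (fstNull hprem hpre)
    set C5 : Set (ℝ × (ℝ × ℝ)) := {w : ℝ × (ℝ × ℝ) | w.2.2 ∈ ZLa ∪ Z3} with hC5def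
    have hC5m : MeasurableSet C5 := (measurable_snd.comp measurable_snd) hZbm
    have hC5_0 : volume C5 = 0 := by
      refine prodNull hC5m ?_
      filter_upwards with l
      exact measure_mono_null (fun p hp => hp) (sndNull hZbm hZb0)
    set C6 : Set (ℝ × (ℝ × ℝ)) := {w : ℝ × (ℝ × ℝ) | w.1 * w.2.2 ∈ ZLa ∪ Z3} with hC6def
    have hC6m : MeasurableSet C6 := (measurable_fst.mul (measurable_snd.comp measurable_snd)) hZbm
    have hC6_0 : volume C6 = 0 := by
      refine prodNull hC6m ?_
      filter_upwards [aeNZ] with l hl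
      have hpre : volume ((fun t : ℝ => l * t) ⁻¹' (ZLa ∪ Z3)) = 0 := npp_mul_left hl _ hZb0
      have hprem : MeasurableSet ((fun t : ℝ => l * t) ⁻¹' (ZLa ∪ Z3)) :=
        hZbm.preimage (measurable_const.mul measurable_id)
      exact measure_mono_null (fun p hp => hp) (sndNull hprem hpre)
    set Tc : Set (ℝ × (ℝ × ℝ)) := C1 ∪ (C2 ∪ (C3 ∪ (C4 ∪ (C5 ∪ C6)))) with hTcdef
    have hTcm : MeasurableSet Tc :=
      hC1m.union (hC2m.union (hC3m.union (hC4m.union (hC5m.union hC6m))))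
    have hTc0 : volume Tc = 0 :=
      measure_union_null hC1_0 (measure_union_null hC2_0 (measure_union_null hC3_0
        (measure_union_null hC4_0 (measure_union_null hC5_0 hC6_0))))
    have hTc : ∀ l x y : ℝ, 0 < l → 0 < x → 0 < y → (l, (x, y)) ∉ Tc →
        c (l * (x + y)) - A (l * (x + y)) - La (l * (x + y)) - Lb (l * (x + y)) =
          c (x + y) - A (x + y) - La (x + y) - Lb (x + y) := by
      intro l x y hl hx hy hw
      have h1 : (x, y) ∉ M := fun h => hw (Or.inl h)
      have h2 : (l * x, l * y) ∉ M := fun h => hw (Or.inr (Or.inl h))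
      have h3 : x ∉ ZLa := fun h => hw (Or.inr (Or.inr (Or.inl h)))
      have h4 : l * x ∉ ZLa := fun h => hw (Or.inr (Or.inr (Or.inr (Or.inl h))))
      have h5 : y ∉ ZLa ∪ Z3 := fun h => hw (Or.inr (Or.inr (Or.inr (Or.inr (Or.inl h)))))
      have h6 : l * y ∉ ZLa ∪ Z3 := fun h => hw (Or.inr (Or.inr (Or.inr (Or.inr (Or.inr h)))))
      have E1 := hform x y hx hy h1 h3 h5
      have E2 := hform (l * x) (l * y) (mul_pos hl hx) (mul_pos hl hy) h2 h4 h6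
      rw [show l * x + l * y = l * (x + y) by ring] at E2
      rw [mul_div_mul_left x (x + y) (ne_of_gt hl)] at E2
      rw [mul_div_mul_left y (x + y) (ne_of_gt hl)] at E2
      rw [mul_div_mul_left x y (ne_of_gt hl)] at E2
      linarith
    obtain ⟨hSTcm, hSTc0⟩ := sliceNull hTcm hTc0
    set C' : Set (ℝ × (ℝ × ℝ)) :=
      {w : ℝ × (ℝ × ℝ) | (w.1, (w.2.2, w.2.1 - w.2.2)) ∈ Tc} with hC'def
    have hC'm : MeasurableSet C' := by
      apply MeasurableSet.preimage hTcm
      exact measurable_fst.prodMk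
        ((measurable_snd.comp measurable_snd).prodMk
          ((measurable_fst.comp measurable_snd).sub (measurable_snd.comp measurable_snd)))
    have hC'0 : volume C' = 0 := by
      refine prodNull hC'm ?_
      filter_upwards [aeNotMem hSTc0] with l hl
      have hTl0 : volume {p2 : ℝ × ℝ | (l, p2) ∈ Tc} = 0 := by
        by_contra hcon; exact hl hcon
      have hTlm : MeasurableSet {p2 : ℝ × ℝ | (l, p2) ∈ Tc} := measurable_prodMk_left hTcm
      have h1 := secNull2 (g := fun t : ℝ => t) (h := fun t s : ℝ => s - t) hTlm hTl0
        measurable_id (by exact measurable_snd.sub measurable_fst) npp_id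
        (by filter_upwards with t; exact npp_sub_right t)
      have h1m : MeasurableSet {p : ℝ × ℝ |
          ((fun t : ℝ => t) p.1, (fun t s : ℝ => s - t) p.1 p.2) ∈
            {p2 : ℝ × ℝ | (l, p2) ∈ Tc}} := by
        apply MeasurableSet.preimage hTlm
        exact measurable_fst.prodMk (measurable_snd.sub measurable_fst)
      have h2 := swapNull h1m h1
      exact measure_mono_null (fun p hp => hp) h2
    obtain ⟨hBcm, hBc0⟩ := slice3 hC'm hC'0
    have hclaim2 : ∀ l s : ℝ, 0 < l → 0 < s →
        (l, s) ∉ {p : ℝ × ℝ | volume {v : ℝ | (p.1, (p.2, v)) ∈ C'} ≠ 0} →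
        c (l * s) - A (l * s) - La (l * s) - Lb (l * s) = c s - A s - La s - Lb s := by
      intro l s hl hs hls
      have hsec : volume {v : ℝ | (l, (s, v)) ∈ C'} = 0 := by
        by_contra hcon; exact hls hcon
      obtain ⟨x, hxI, hxg⟩ := pick (ioo_ne_zero hs) hsec
      have h := hTc l x (s - x) hl hxI.1 (by linarith [hxI.2]) hxg
      rw [show x + (s - x) = s by ring] at h
      exact h
    have hBcswm : MeasurableSet {p : ℝ × ℝ |
        (p.2, p.1) ∈ {p : ℝ × ℝ | volume {v : ℝ | (p.1, (p.2, v)) ∈ C'} ≠ 0}} :=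
      (measurable_snd.prodMk measurable_fst) hBcm
    have hBcsw0 : volume {p : ℝ × ℝ |
        (p.2, p.1) ∈ {p : ℝ × ℝ | volume {v : ℝ | (p.1, (p.2, v)) ∈ C'} ≠ 0}} = 0 :=
      swapNull hBcm hBc0
    obtain ⟨hSm3, hS03⟩ := sliceNull hBcswm hBcsw0
    obtain ⟨s₀, hs₀I, hs₀g⟩ := pick hIne hS03
    rw [mem_Ioi] at hs₀I
    have hZc'0 : volume {l : ℝ | (s₀, l) ∈ {p : ℝ × ℝ |
        (p.2, p.1) ∈ {p : ℝ × ℝ | volume {v : ℝ | (p.1, (p.2, v)) ∈ C'} ≠ 0}}} = 0 := by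
      by_contra hcon; exact hs₀g hcon
    have hZc'm : MeasurableSet {l : ℝ | (s₀, l) ∈ {p : ℝ × ℝ |
        (p.2, p.1) ∈ {p : ℝ × ℝ | volume {v : ℝ | (p.1, (p.2, v)) ∈ C'} ≠ 0}}} :=
      measurable_prodMk_left hBcswm
    refine ⟨c s₀ - A s₀ - La s₀ - Lb s₀,
      (fun x : ℝ => x / s₀) ⁻¹' {l : ℝ | (s₀, l) ∈ {p : ℝ × ℝ |
        (p.2, p.1) ∈ {p : ℝ × ℝ | volume {v : ℝ | (p.1, (p.2, v)) ∈ C'} ≠ 0}}},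
      hZc'm.preimage (measurable_id.div_const s₀),
      npp_div_const (ne_of_gt hs₀I) _ hZc'0, ?_⟩
    intro s hs hsZ
    have hlq : (s / s₀, s₀) ∉ {p : ℝ × ℝ | volume {v : ℝ | (p.1, (p.2, v)) ∈ C'} ≠ 0} :=
      fun h => hsZ h
    have h := hclaim2 (s / s₀) s₀ (div_pos hs hs₀I) hs₀I hlq
    rw [div_mul_cancel₀ s (ne_of_gt hs₀I)] at h
    linarith
  obtain ⟨γ, Zc, hZcm, hZc0, hZc⟩ := Fc
  have Fd : ∃ Zd : Set ℝ, MeasurableSet Zd ∧ volume Zd = 0 ∧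
      ∀ x, 0 < x → x ∉ Zd → d x = La (x / (x + 1)) - Lb (x + 1) + q + β - γ := by
    have hD1m : MeasurableSet {p : ℝ × ℝ | (p.1 * p.2, p.1) ∈ M} :=
      ((measurable_fst.mul measurable_snd).prodMk measurable_fst) hM
    have hD1_0 : volume {p : ℝ × ℝ | (p.1 * p.2, p.1) ∈ M} = 0 := by
      have hMswm : MeasurableSet (Prod.swap ⁻¹' M) := measurable_swap hM
      have hMsw0 : volume (Prod.swap ⁻¹' M) = 0 := swapNull hM hM0
      have h1 := secNull2 (g := fun w : ℝ => w) (h := fun w s : ℝ => w * s) hMswm hMsw0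
        measurable_id (by exact measurable_fst.mul measurable_snd) npp_id
        (by filter_upwards [aeNZ] with t ht; exact npp_mul_left ht)
      exact measure_mono_null (fun p hp => hp) h1
    have hD2m : MeasurableSet {p : ℝ × ℝ | p.1 * p.2 ∈ ZLa} :=
      (measurable_fst.mul measurable_snd) hZLam
    have hD2_0 : volume {p : ℝ × ℝ | p.1 * p.2 ∈ ZLa} = 0 := by
      have h1 := secNull1 (Z := ZLa) hZLam hZLa0 (h := fun t s : ℝ => t * s)
        (by exact measurable_fst.mul measurable_snd)
        (by filter_upwards [aeNZ] with t ht; exact npp_mul_left ht)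
      exact measure_mono_null (fun p hp => hp) h1
    have hZbm : MeasurableSet (ZLa ∪ Z3) := hZLam.union hZ3m
    have hZb0 : volume (ZLa ∪ Z3) = 0 := measure_union_null hZLa0 hZ3_0
    have hD3m : MeasurableSet {p : ℝ × ℝ | p.1 ∈ ZLa ∪ Z3} := measurable_fst hZbm
    have hD3_0 : volume {p : ℝ × ℝ | p.1 ∈ ZLa ∪ Z3} = 0 := fstNull hZbm hZb0
    have hD4m : MeasurableSet {p : ℝ × ℝ | p.1 * p.2 + p.1 ∈ Zc} :=
      ((measurable_fst.mul measurable_snd).add measurable_fst) hZcm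
    have hD4_0 : volume {p : ℝ × ℝ | p.1 * p.2 + p.1 ∈ Zc} = 0 := by
      have h1 := secNull1 (Z := Zc) hZcm hZc0 (h := fun t s : ℝ => t * s + t)
        (by exact (measurable_fst.mul measurable_snd).add measurable_fst)
        (by filter_upwards [aeNZ] with t ht; exact npp_affine ht)
      exact measure_mono_null (fun p hp => hp) h1
    set Td' : Set (ℝ × ℝ) := {p : ℝ × ℝ | (p.1 * p.2, p.1) ∈ M} ∪
      ({p : ℝ × ℝ | p.1 * p.2 ∈ ZLa} ∪ ({p : ℝ × ℝ | p.1 ∈ ZLa ∪ Z3} ∪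
        {p : ℝ × ℝ | p.1 * p.2 + p.1 ∈ Zc})) with hTd'def
    have hTd'm : MeasurableSet Td' := hD1m.union (hD2m.union (hD3m.union hD4m))
    have hTd'0 : volume Td' = 0 :=
      measure_union_null hD1_0 (measure_union_null hD2_0 (measure_union_null hD3_0 hD4_0))
    have hTdm : MeasurableSet {p : ℝ × ℝ | (p.2, p.1) ∈ Td'} :=
      (measurable_snd.prodMk measurable_fst) hTd'm
    have hTd0 : volume {p : ℝ × ℝ | (p.2, p.1) ∈ Td'} = 0 := swapNull hTd'm hTd'0
    obtain ⟨hZdm, hZd0⟩ := sliceNull hTdm hTd0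
    refine ⟨{x : ℝ | volume {t : ℝ | (x, t) ∈ {p : ℝ × ℝ | (p.2, p.1) ∈ Td'}} ≠ 0},
      hZdm, hZd0, ?_⟩
    intro x hx hxZ
    have hsec : volume {t : ℝ | (x, t) ∈ {p : ℝ × ℝ | (p.2, p.1) ∈ Td'}} = 0 := by
      by_contra hcon; exact hxZ hcon
    obtain ⟨t, htI, htg⟩ := pick hIne hsec
    rw [mem_Ioi] at htI
    have hg1 : (t * x, t) ∉ M := fun h => htg (Or.inl h)
    have hg2 : t * x ∉ ZLa := fun h => htg (Or.inr (Or.inl h))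
    have hg3 : t ∉ ZLa ∪ Z3 := fun h => htg (Or.inr (Or.inr (Or.inl h)))
    have hg4 : t * x + t ∉ Zc := fun h => htg (Or.inr (Or.inr (Or.inr h)))
    have htx : 0 < t * x := mul_pos htI hx
    have E := heq (t * x) t htx htI hg1
    have hr1 : (t * x) / t = x := by field_simp
    rw [hr1] at E
    have Ea := Fa (t * x) htx hg2
    have Eb := Fb t htI hg3
    have Ec := hZc (t * x + t) (by linarith) hg4
    have hA : A (t * x + t) = A (t * x) + A t := hAadd (t * x) t htx htI
    have hrr : t * x + t = t * (x + 1) := by ring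
    rw [hrr] at Ec
    have hx1 : (0:ℝ) < x + 1 := by linarith
    have hLa1 : La (t * (x + 1)) = La t + La (x + 1) := hLamul t (x + 1) htI hx1
    have hLa2 : La (t * x) = La t + La x := hLamul t x htI hx
    have hLb1 : Lb (t * (x + 1)) = Lb t + Lb (x + 1) := hLbmul t (x + 1) htI hx1
    have hALa : A (t * (x + 1)) = A (t * x) + A t := by rw [← hrr]; exact hA
    have hLaD : La (x / (x + 1)) = La x - La (x + 1) := logDiv La hLamul x (x + 1) hx hx1
    rw [hrr] at E
    linarith
  obtain ⟨Zd, hZdm, hZd0, hZd⟩ := Fd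
  refine ⟨A, La, Lb, q, β, γ, hAadd, hLamul, hLbmul, ?_⟩
  have hbig : volume (ZLa ∪ (Z3 ∪ (Zc ∪ Zd))) = 0 :=
    measure_union_null hZLa0 (measure_union_null hZ3_0 (measure_union_null hZc0 hZd0))
  filter_upwards [aeNotMem hbig] with x hx hxI
  rw [mem_Ioi] at hxI
  have hx1 : x ∉ ZLa := fun hc => hx (Or.inl hc)
  have hx2 : x ∉ Z3 := fun hc => hx (Or.inr (Or.inl hc))
  have hx3 : x ∉ Zc := fun hc => hx (Or.inr (Or.inr (Or.inl hc)))
  have hx4 : x ∉ Zd := fun hc => hx (Or.inr (Or.inr (Or.inr hc)))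
  exact ⟨Fa x hxI hx1, Fb x hxI (fun hc => hc.elim (fun h => hx1 h) (fun h => hx2 h)),
    hZc x hxI hx3, hZd x hxI hx4⟩
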